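/- arXiv:1906.03991 — 4 statements merged into one kernel-verified Lean document; each statement's English description precedes it below -/
import Mathlib

section
/- Suppose a < b are elements of [n] and the word ba can be read from P to Q, where P, Q are subsets of [n] with |P| = |Q|. Then there exists a subset S with P ≤ S ≤ Q and both a, b ∈ S. In particular, the word ab can also be read from P to Q. -/
/-- The `i`-th smallest element (0-indexed) of a finite set of naturals
(`0` if `i` is out of range). -/
def nthEl (S : Finset ℕ) (i : ℕ) : ℕ := (S.sort (· ≤ ·)).getD i 0

/-- The order on subsets of equal cardinality: `S ≤ T` iff `|S| = |T|` and the `i`-th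
smallest element of `S` is at most that of `T`, for all `i`. -/
def FLE (S T : Finset ℕ) : Prop :=
  S.card = T.card ∧ ∀ i < T.card, nthEl S i ≤ nthEl T i

/-- The general order: `S ≤ T` iff `|S| ≥ |T|` and the `i`-th smallest element of `S`
is at most that of `T` for all `i < |T|`. -/
def GLE (S T : Finset ℕ) : Prop :=
  T.card ≤ S.card ∧ ∀ i < T.card, nthEl S i ≤ nthEl T i

/-- A word `w` over `{1,…,n}` is readable from `P` to `Q` if there is a chain
`P ≤ S₁ ≤ … ≤ S_{|w|} ≤ Q` of subsets of `{1,…,n}` with `wᵢ ∈ Sᵢ` for each `i`. -/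
def Readable (n : ℕ) (w : List ℕ) (P Q : Finset ℕ) : Prop :=
  ∃ L : List (Finset ℕ), L.length = w.length ∧ (∀ A ∈ L, A ⊆ Finset.Icc 1 n) ∧
    List.Chain' FLE (P :: (L ++ [Q])) ∧
    ∀ i (h : i < w.length), w.get ⟨i, h⟩ ∈ L.getD i ∅

/-- Tropical (max-plus) product of matrices indexed by subsets of `{1,…,n}`. -/
noncomputable def tmul (n : ℕ) (A B : Finset ℕ → Finset ℕ → WithBot ℝ) :
    Finset ℕ → Finset ℕ → WithBot ℝ :=
  fun P Q => ((Finset.Icc 1 n).powerset).sup fun R => A P R + B R Q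

open Classical in
/-- The image of a generator `x ∈ {1,…,n}` under `ρₙ`. -/
noncomputable def rhoGen (n : ℕ) (x : ℕ) (P Q : Finset ℕ) : WithBot ℝ :=
  if FLE P Q then
    (if ∃ S : Finset ℕ, S ⊆ Finset.Icc 1 n ∧ FLE P S ∧ FLE S Q ∧ x ∈ S then 1 else 0)
  else ⊥

open Classical in
/-- The image of a word under `ρₙ`, extended multiplicatively (the empty word maps to the
matrix with `0` in positions `(P,Q)` with `P ≤ Q` and `-∞` elsewhere). -/
noncomputable def rhoW (n : ℕ) : List ℕ → Finset ℕ → Finset ℕ → WithBot ℝ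
  | [] => fun P Q => if FLE P Q then 0 else ⊥
  | x :: w => tmul n (rhoGen n x) (rhoW n w)

/-- The Knuth relations over `{1,…,n}`. -/
inductive KnuthRel (n : ℕ) : List ℕ → List ℕ → Prop
  | k1 (a b c : ℕ) (h1 : 1 ≤ a) (h2 : a < b) (h3 : b ≤ c) (h4 : c ≤ n) :
      KnuthRel n [b, c, a] [b, a, c]
  | k2 (a b c : ℕ) (h1 : 1 ≤ a) (h2 : a ≤ b) (h3 : b < c) (h4 : c ≤ n) :
      KnuthRel n [c, a, b] [a, c, b]

/-- The plactic congruence on words: the equivalence generated by applying Knuth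
relations inside words. Two words are related iff they represent the same element of
the plactic monoid of rank `n`. -/
def PlacticRel (n : ℕ) : List ℕ → List ℕ → Prop :=
  Relation.EqvGen fun w v => ∃ p s x y, KnuthRel n x y ∧ w = p ++ x ++ s ∧ v = p ++ y ++ s

/-- A semistandard Young tableau over `{1,…,n}`, given by its list of rows
(row 0 is the bottom row): entries lie in `{1,…,n}`, rows weakly increase left to right,
row lengths weakly decrease going up, columns strictly increase going up
(i.e. strictly decrease reading down). -/
structure Tableau (n : ℕ) where
  rows : List (List ℕ)
  entries_mem : ∀ r ∈ rows, ∀ x ∈ r, x ∈ Finset.Icc 1 n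
  row_weak : ∀ r ∈ rows, List.Pairwise (· ≤ ·) r
  shape : ∀ i, (rows.getD (i + 1) []).length ≤ (rows.getD i []).length
  col_strict : ∀ i j, j < (rows.getD (i + 1) []).length →
    (rows.getD i []).getD j 0 < (rows.getD (i + 1) []).getD j 0

/-- The number of occurrences of the symbol `y` in row `x` (rows numbered from 1, from
the bottom) of the tableau `T`. -/
def rowCount {n : ℕ} (T : Tableau n) (x y : ℕ) : ℕ := (T.rows.getD (x - 1) []).count y

/-- The row reading of a tableau: rows read left to right, from top row to bottom row. -/
def rowReading {n : ℕ} (T : Tableau n) : List ℕ := T.rows.reverse.flatten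

/-- The `j`-th column of a tableau, read from top to bottom. -/
def colOf {n : ℕ} (T : Tableau n) (j : ℕ) : List ℕ :=
  ((List.range T.rows.length).reverse).filterMap fun i => (T.rows.getD i [])[j]?

/-- The column reading of a tableau: columns read top to bottom, left to right. -/
def colReading {n : ℕ} (T : Tableau n) : List ℕ :=
  ((List.range ((T.rows.getD 0 []).length)).map (colOf T)).flatten

/-- The `(k,m)`-completion of `S ⊆ {1,…,m}`: adjoin to `S` the `k - |S|` largest
elements of `{1,…,m} \ S`. -/
def completion (k m : ℕ) (S : Finset ℕ) : Finset ℕ :=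
  S ∪ ((((Finset.Icc 1 m) \ S).sort (· ≤ ·)).reverse.take (k - S.card)).toFinset

/-- Tropical (max-plus) product of `n × n` matrices over `ℝ ∪ {-∞}`. -/
noncomputable def tmulF (n : ℕ) (A B : Fin n → Fin n → WithBot ℝ) :
    Fin n → Fin n → WithBot ℝ :=
  fun i j => Finset.univ.sup fun k => A i k + B k j

/-- The tropical identity matrix. -/
noncomputable def tIdF (n : ℕ) : Fin n → Fin n → WithBot ℝ :=
  fun i j => if i = j then (0 : WithBot ℝ) else ⊥
-- aux starts here
private def ith (l : List ℕ) (i : ℕ) : ℕ := l.getD i 0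

private lemma ith_mem {l : List ℕ} {i : ℕ} (hi : i < l.length) : ith l i ∈ l := by
  rw [ith, l.getD_eq_getElem _ hi]; exact List.getElem_mem hi

private lemma ith_lt_ith {l : List ℕ} (hl : l.Pairwise (· < ·)) {i j : ℕ}
    (hij : i < j) (hj : j < l.length) : ith l i < ith l j := by
  have hi : i < l.length := hij.trans hj
  rw [ith, ith, l.getD_eq_getElem _ hi, l.getD_eq_getElem _ hj]
  exact List.pairwise_iff_get.1 hl ⟨i, hi⟩ ⟨j, hj⟩ hij

private lemma ith_le_ith {l : List ℕ} (hl : l.Pairwise (· < ·)) {i j : ℕ}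
    (hij : i ≤ j) (hj : j < l.length) : ith l i ≤ ith l j := by
  rcases eq_or_lt_of_le hij with rfl | h
  · exact le_rfl
  · exact (ith_lt_ith hl h hj).le

private lemma ith_add_le {l : List ℕ} (hl : l.Pairwise (· < ·)) {i d : ℕ}
    (h : i + d < l.length) : ith l i + d ≤ ith l (i + d) := by
  induction d with
  | zero => simp
  | succ d ihd =>
    have h' : i + d < l.length := by omega
    have h2 := ith_lt_ith hl (show i + d < i + (d + 1) by omega) h
    have h3 := ihd h'
    omega

private lemma key {s t : List ℕ} (hs : s.Pairwise (· < ·)) (ht : t.Pairwise (· < ·))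
    (hlen : s.length = t.length)
    (hle : ∀ i < t.length, ith s i ≤ ith t i)
    {a b p q : ℕ} (hp : p < s.length) (hq : q < t.length)
    (hbs : ith s p = b) (hat : ith t q = a) (hab : a < b)
    (h1 : ∀ x ∈ s, 1 ≤ x) :
    ∃ u : List ℕ, u.Pairwise (· < ·) ∧ u.length = s.length ∧
      (∀ i < s.length, ith s i ≤ ith u i ∧ ith u i ≤ ith t i) ∧ a ∈ u ∧ b ∈ u := by
  have hqp : q < p := by
    by_contra hc
    push_neg at hc
    have h2 : ith t p ≤ ith t q := ith_le_ith ht hc hq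
    have h3 : ith s p ≤ ith t p := hle p (hlen ▸ hp)
    omega
  have hgap : ∀ i ≤ p, ith s i + (p - i) ≤ b := by
    intro i hi
    have h2 : i + (p - i) < s.length := by omega
    have h3 := ith_add_le hs h2
    have e : i + (p - i) = p := by omega
    rw [e] at h3
    omega
  have hs1 : ∀ i < s.length, 1 ≤ ith s i := fun i hi => h1 _ (ith_mem hi)
  set f : ℕ → ℕ := fun i => if i < p then min (ith t i) (b - (p - i)) else ith s i with hf
  set u : List ℕ := (List.range s.length).map f with hu
  have hul : u.length = s.length := by simp [hu]
  have hui : ∀ i < s.length, ith u i = f i := by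
    intro i hi
    rw [ith, u.getD_eq_getElem _ (by omega)]
    simp [hu]
  -- bounds for i < p
  have hbnd : ∀ i < p, ith s i ≤ f i ∧ f i ≤ ith t i ∧ ith s i + (p - i) ≤ b ∧ 1 ≤ ith s i := by
    intro i hi
    have hil : i < s.length := by omega
    have h2 := hgap i hi.le
    have h3 := hle i (by omega)
    have h4 := hs1 i hil
    have h5 : f i = min (ith t i) (b - (p - i)) := by simp [hf, hi]
    refine ⟨?_, ?_, h2, h4⟩ <;> rw [h5] <;> omega
  have hfp : ∀ i, p ≤ i → f i = ith s i := by
    intro i hi; simp [hf]; omega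
  have hmono : ∀ i j, i < j → j < s.length → f i < f j := by
    intro i j hij hj
    rcases lt_or_ge j p with hjp | hpj
    · have hb1 := hbnd i (by omega)
      have hb2 := hbnd j hjp
      have h5 : f i = min (ith t i) (b - (p - i)) := by simp [hf]; omega
      have h6 : f j = min (ith t j) (b - (p - j)) := by simp [hf]; omega
      have h7 : ith t i < ith t j := ith_lt_ith ht hij (by omega)
      rw [h5, h6]; omega
    · rcases lt_or_ge i p with hip | hpi
      · have hb1 := hbnd i hip
        have h5 : f i = min (ith t i) (b - (p - i)) := by simp [hf]; omega
        have h6 : ith s p ≤ ith s j := ith_le_ith hs hpj hj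
        rw [h5, hfp j hpj]; omega
      · rw [hfp i hpi, hfp j hpj]
        exact ith_lt_ith hs hij hj
  have husort : u.Pairwise (· < ·) := by
    rw [List.pairwise_iff_get]
    intro i j hij
    have hi' : (i : ℕ) < s.length := by have := i.2; omega
    have hj' : (j : ℕ) < s.length := by have := j.2; omega
    have e1 : u.get i = ith u i := by rw [ith, u.getD_eq_getElem _ i.2]; simp
    have e2 : u.get j = ith u j := by rw [ith, u.getD_eq_getElem _ j.2]; simp
    rw [e1, e2, hui _ hi', hui _ hj']
    exact hmono _ _ hij hj'
  refine ⟨u, husort, hul, ?_, ?_, ?_⟩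
  · intro i hi
    rw [hui i hi]
    rcases lt_or_ge i p with hip | hpi
    · have hb1 := hbnd i hip
      exact ⟨hb1.1, hb1.2.1⟩
    · rw [hfp i hpi]
      exact ⟨le_rfl, hle i (by omega)⟩
  · -- a ∈ u
    have hqt : q < t.length := hq
    have hql : q < s.length := by omega
    rcases le_or_gt (b - a) (p - q) with hc | hc
    · set i₀ := p - (b - a) with hi₀
      have hi₀p : i₀ < p := by omega
      have hi₀l : i₀ < s.length := by omega
      have hqi : q ≤ i₀ := by omega
      have ht₀ : a ≤ ith t i₀ := by
        rw [← hat]; exact ith_le_ith ht hqi (by omega)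
      have h5 : f i₀ = min (ith t i₀) (b - (p - i₀)) := by simp [hf]; omega
      have h6 : f i₀ = a := by rw [h5]; omega
      have : ith u i₀ = a := by rw [hui _ hi₀l, h6]
      rw [← this]; exact ith_mem (by omega)
    · have h5 : f q = min (ith t q) (b - (p - q)) := by simp [hf]; omega
      have h6 : f q = a := by rw [h5, hat]; omega
      have : ith u q = a := by rw [hui _ hql, h6]
      rw [← this]; exact ith_mem (by omega)
  · have h6 : f p = b := by rw [hfp p le_rfl, hbs]
    have : ith u p = b := by rw [hui _ hp, h6]
    rw [← this]; exact ith_mem (by omega)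

private lemma FLE_refl (S : Finset ℕ) : FLE S S := ⟨rfl, fun _ _ => le_rfl⟩

private lemma FLE_trans {A B C : Finset ℕ} (h1 : FLE A B) (h2 : FLE B C) : FLE A C :=
  ⟨h1.1.trans h2.1, fun i hi => (h1.2 i (by rw [h2.1]; exact hi)).trans (h2.2 i hi)⟩

private lemma keyF {n a b : ℕ} (hab : a < b) {S₁ S₂ : Finset ℕ}
    (h₁ : S₁ ⊆ Finset.Icc 1 n) (h₂ : S₂ ⊆ Finset.Icc 1 n)
    (h12 : FLE S₁ S₂) (hb : b ∈ S₁) (ha : a ∈ S₂) :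
    ∃ S : Finset ℕ, S ⊆ Finset.Icc 1 n ∧ FLE S₁ S ∧ FLE S S₂ ∧ a ∈ S ∧ b ∈ S := by
  classical
  set s := S₁.sort (· ≤ ·) with hsdef
  set t := S₂.sort (· ≤ ·) with htdef
  have hs : s.Pairwise (· < ·) := S₁.sortedLT_sort.pairwise
  have ht : t.Pairwise (· < ·) := S₂.sortedLT_sort.pairwise
  have hsl : s.length = S₁.card := Finset.length_sort _
  have htl : t.length = S₂.card := Finset.length_sort _
  have hlen : s.length = t.length := by rw [hsl, htl, h12.1]
  have hle : ∀ i < t.length, ith s i ≤ ith t i := by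
    intro i hi
    exact h12.2 i (htl ▸ hi)
  obtain ⟨⟨p, hp⟩, hpe⟩ := List.mem_iff_get.1 ((Finset.mem_sort (α := ℕ) (· ≤ ·)).2 hb)
  obtain ⟨⟨q, hq⟩, hqe⟩ := List.mem_iff_get.1 ((Finset.mem_sort (α := ℕ) (· ≤ ·)).2 ha)
  have hbs : ith s p = b := by rw [ith, List.getD_eq_getElem _ _ hp, ← hpe]; rfl
  have hat : ith t q = a := by rw [ith, List.getD_eq_getElem _ _ hq, ← hqe]; rfl
  have h1 : ∀ x ∈ s, 1 ≤ x := by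
    intro x hx
    have := h₁ ((Finset.mem_sort (α := ℕ) (· ≤ ·)).1 hx)
    exact (Finset.mem_Icc.1 this).1
  have hn : ∀ x ∈ t, x ≤ n := by
    intro x hx
    have := h₂ ((Finset.mem_sort (α := ℕ) (· ≤ ·)).1 hx)
    exact (Finset.mem_Icc.1 this).2
  obtain ⟨u, husort, hul, hubnd, hau, hbu⟩ := key hs ht hlen hle hp hq hbs hat hab h1
  have hnodup : u.Nodup := husort.nodup
  have hule : u.Pairwise (· ≤ ·) := husort.imp le_of_lt
  have hsort : Finset.sort u.toFinset (· ≤ ·) = u :=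
    (List.toFinset_sort (· ≤ ·) hnodup).mpr hule
  have hcardu : u.toFinset.card = u.length := by
    have := Finset.length_sort (s := u.toFinset) (· ≤ ·)
    rw [hsort] at this
    exact this.symm
  have hnth : ∀ i, nthEl u.toFinset i = ith u i := by
    intro i
    rw [nthEl, hsort]
    rfl
  refine ⟨u.toFinset, ?_, ?_, ?_, List.mem_toFinset.2 hau, List.mem_toFinset.2 hbu⟩
  · intro x hx
    obtain ⟨⟨i, hi⟩, hie⟩ := List.mem_iff_get.1 (List.mem_toFinset.1 hx)
    have hix : ith u i = x := by rw [ith, List.getD_eq_getElem _ _ hi, ← hie]; rfl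
    have his : i < s.length := by omega
    have hbd := hubnd i his
    have hx1 : 1 ≤ ith s i := h1 _ (ith_mem his)
    have hxn : ith t i ≤ n := hn _ (ith_mem (by omega))
    rw [Finset.mem_Icc]
    omega
  · refine ⟨by rw [hcardu, hul, hsl], fun i hi => ?_⟩
    rw [hnth]
    exact (hubnd i (by omega)).1
  · refine ⟨by rw [hcardu, hul, hsl, h12.1], fun i hi => ?_⟩
    rw [hnth]
    exact (hubnd i (by omega)).2


/-- if `a < b` and the word `ba` can be read from `P` to `Q` (where
`|P| = |Q|`), then there is a set `S` with `P ≤ S ≤ Q` and `a, b ∈ S`; in particular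
`ab` can also be read from `P` to `Q`. -/
theorem stmt2 (n a b : ℕ) (ha : 1 ≤ a) (hb : b ≤ n) (hab : a < b) (P Q : Finset ℕ)
    (hP : P ⊆ Finset.Icc 1 n) (hQ : Q ⊆ Finset.Icc 1 n) (hcard : P.card = Q.card)
    (h : Readable n [b, a] P Q) :
    ∃ S : Finset ℕ, S ⊆ Finset.Icc 1 n ∧ FLE P S ∧ FLE S Q ∧ a ∈ S ∧ b ∈ S ∧
      Readable n [a, b] P Q := by
  obtain ⟨L, hL, hLsub, hchain, hmemL⟩ := h
  simp only [List.length_cons, List.length_nil] at hL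
  rw [List.length_eq_two] at hL
  obtain ⟨S₁, S₂, rfl⟩ := hL
  simp only [List.Chain', List.cons_append, List.nil_append, List.isChain_cons_cons, List.isChain_singleton,
    and_true] at hchain
  obtain ⟨hPS₁, hS₁S₂, hS₂Q⟩ := hchain
  have hmb : b ∈ S₁ := by simpa using hmemL 0 (by norm_num)
  have hma : a ∈ S₂ := by simpa using hmemL 1 (by norm_num)
  have h₁ : S₁ ⊆ Finset.Icc 1 n := hLsub S₁ (by simp)
  have h₂ : S₂ ⊆ Finset.Icc 1 n := hLsub S₂ (by simp)
  obtain ⟨S, hSsub, h1S, hS2, haS, hbS⟩ := keyF hab h₁ h₂ hS₁S₂ hmb hma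
  have hPS : FLE P S := FLE_trans hPS₁ h1S
  have hSQ : FLE S Q := FLE_trans hS2 hS₂Q
  refine ⟨S, hSsub, hPS, hSQ, haS, hbS, ⟨[S, S], rfl, ?_, ?_, ?_⟩⟩
  · intro A hA
    simp at hA
    rcases hA with rfl | rfl <;> exact hSsub
  · simp only [List.Chain', List.cons_append, List.nil_append, List.isChain_cons_cons, List.isChain_singleton,
      and_true]
    exact ⟨hPS, FLE_refl S, hSQ⟩
  · rintro (_ | _ | i) hi
    · simpa
    · simpa
    · simp only [List.length_cons, List.length_nil] at hi; omega
end

section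
/- If a word w over the alphabet {1,...,n} contains a strictly decreasing scattered subword of length k+1 or more, then w cannot be read from the set {1,...,k} to the set {n-k+1,...,n}. -/
lemma nthEl_mem (S : Finset ℕ) (i : ℕ) (hi : i < S.card) : nthEl S i ∈ S := by
  have h : i < (S.sort (· ≤ ·)).length := by rwa [Finset.length_sort]
  rw [nthEl, List.getD_eq_getElem _ _ h]
  exact (Finset.mem_sort _).mp (List.getElem_mem h)

lemma nthEl_lt (S : Finset ℕ) {i j : ℕ} (hij : i < j) (hj : j < S.card) :
    nthEl S i < nthEl S j := by
  have hl : (S.sort (· ≤ ·)).length = S.card := Finset.length_sort _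
  have hj' : j < (S.sort (· ≤ ·)).length := by omega
  have hi' : i < (S.sort (· ≤ ·)).length := by omega
  rw [nthEl, nthEl, List.getD_eq_getElem _ _ hi', List.getD_eq_getElem _ _ hj']
  exact List.pairwise_iff_getElem.mp (Finset.sortedLT_sort S).pairwise i j hi' hj' hij

lemma nthEl_le (S : Finset ℕ) {i j : ℕ} (hij : i ≤ j) (hj : j < S.card) :
    nthEl S i ≤ nthEl S j := by
  rcases Nat.lt_or_ge i j with h | h
  · exact le_of_lt (nthEl_lt S h hj)
  · have : i = j := by omega
    rw [this]

lemma exists_nthEl {S : Finset ℕ} {x : ℕ} (hx : x ∈ S) : ∃ i < S.card, nthEl S i = x := by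
  have hm : x ∈ S.sort (· ≤ ·) := (Finset.mem_sort _).mpr hx
  obtain ⟨i, hi, hix⟩ := List.mem_iff_getElem.mp hm
  refine ⟨i, by rwa [Finset.length_sort] at hi, ?_⟩
  rw [nthEl, List.getD_eq_getElem _ _ hi, hix]

lemma cnt_mono {S T : Finset ℕ} (h : FLE S T) (v : ℕ) :
    (T.filter (· < v)).card ≤ (S.filter (· < v)).card := by
  obtain ⟨hcard, hle⟩ := h
  set m := (T.filter (· < v)).card with hm
  have hmT : m ≤ T.card := Finset.card_le_card (Finset.filter_subset _ _)
  have hA : ∀ i < m, nthEl T i < v := by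
    intro i hi
    by_contra hcon
    push_neg at hcon
    have hsub : T.filter (· < v) ⊆ (Finset.range i).image (nthEl T) := by
      intro x hx
      rw [Finset.mem_filter] at hx
      obtain ⟨j, hj, hjx⟩ := exists_nthEl hx.1
      have hxv : x < v := hx.2
      have hji : j < i := by
        by_contra hji
        push_neg at hji
        have := nthEl_le T hji hj
        omega
      exact Finset.mem_image.mpr ⟨j, Finset.mem_range.mpr hji, hjx⟩
    have h1 := Finset.card_le_card hsub
    have h2 := Finset.card_image_le (f := nthEl T) (s := Finset.range i)
    rw [Finset.card_range] at h2
    omega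
  have hS : (Finset.range m).image (nthEl S) ⊆ S.filter (· < v) := by
    intro x hx
    obtain ⟨i, hi, rfl⟩ := Finset.mem_image.mp hx
    rw [Finset.mem_range] at hi
    refine Finset.mem_filter.mpr ⟨nthEl_mem S i (by omega), ?_⟩
    have h1 := hle i (by omega)
    have h2 := hA i hi
    show nthEl S i < v
    omega
  have hinj : Set.InjOn (nthEl S) (Finset.range m) := by
    intro a ha b hb hab
    simp only [Finset.coe_range, Set.mem_Iio] at ha hb
    rcases Nat.lt_trichotomy a b with h' | h' | h'
    · exact absurd hab (Nat.ne_of_lt (nthEl_lt S h' (by omega)))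
    · exact h'
    · exact absurd hab.symm (Nat.ne_of_lt (nthEl_lt S h' (by omega)))
  have := Finset.card_image_of_injOn hinj
  have := Finset.card_le_card hS
  rw [Finset.card_range] at *
  omega

instance : IsTrans (Finset ℕ) FLE :=
  ⟨fun S T U h1 h2 => ⟨h1.1.trans h2.1, fun i hi =>
    le_trans (h1.2 i (by rw [h2.1]; exact hi)) (h2.2 i hi)⟩⟩

/-- if a word `w` over `{1,…,n}` contains a strictly decreasing scattered
subword of length at least `k+1`, then `w` cannot be read from `{1,…,k}` to
`{n-k+1,…,n}`. -/
theorem stmt3 (n k : ℕ) (hk : k ≤ n) (w : List ℕ) (hw : ∀ x ∈ w, x ∈ Finset.Icc 1 n)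
    (h : ∃ u : List ℕ, u.Sublist w ∧ k + 1 ≤ u.length ∧ List.Chain' (· > ·) u) :
    ¬ Readable n w (Finset.Icc 1 k) (Finset.Icc (n - k + 1) n) := by
  rintro ⟨L, hlen, hsubs, hchain, hmem⟩
  obtain ⟨u, hsub, hulen, hdec⟩ := h
  obtain ⟨f, hf⟩ := List.sublist_iff_exists_fin_orderEmbedding_get_eq.mp hsub
  have hp : (Finset.Icc 1 k :: (L ++ [Finset.Icc (n - k + 1) n])).Pairwise FLE :=
    List.isChain_iff_pairwise.mp hchain
  have hPL : ∀ A ∈ L, FLE (Finset.Icc 1 k) A := by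
    intro A hA
    exact (List.pairwise_cons.mp hp).1 A (List.mem_append_left _ hA)
  have hLL : L.Pairwise FLE := (List.pairwise_append.mp (List.pairwise_cons.mp hp).2).1
  have hPcard : (Finset.Icc 1 k).card = k := by rw [Nat.card_Icc]; omega
  -- cards of members of L
  have hcard : ∀ A ∈ L, A.card = k := fun A hA => (hPL A hA).1.symm.trans hPcard
  -- index function
  have hwL : L.length = w.length := hlen
  have hg : ∀ j (hj : j < u.length), ((f ⟨j, hj⟩ : Fin w.length) : ℕ) < L.length := by
    intro j hj; rw [hwL]; exact (f ⟨j, hj⟩).isLt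
  set S : ∀ j, j < u.length → Finset ℕ :=
    fun j hj => L.get ⟨(f ⟨j, hj⟩ : Fin w.length), hg j hj⟩ with hSdef
  have hmemS : ∀ j (hj : j < u.length), u.get ⟨j, hj⟩ ∈ S j hj := by
    intro j hj
    have h1 := hmem ((f ⟨j, hj⟩ : Fin w.length) : ℕ) (f ⟨j, hj⟩).isLt
    rw [List.getD_eq_getElem _ _ (hg j hj)] at h1
    rw [hf ⟨j, hj⟩]
    exact h1
  have hSL : ∀ j (hj : j < u.length), S j hj ∈ L := fun j hj => List.get_mem _ _
  have hFLE : ∀ j (hj1 : j + 1 < u.length), FLE (S j (by omega)) (S (j + 1) hj1) := by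
    intro j hj1
    have hlt : ((f ⟨j, by omega⟩ : Fin w.length) : ℕ) < ((f ⟨j + 1, hj1⟩ : Fin w.length) : ℕ) := by
      have : (⟨j, by omega⟩ : Fin u.length) < ⟨j + 1, hj1⟩ := by
        simp [Fin.lt_def]
      exact f.strictMono this
    exact List.pairwise_iff_getElem.mp hLL _ _ (hg j (by omega)) (hg (j + 1) hj1) hlt
  have hdecu : ∀ j (hj1 : j + 1 < u.length),
      u.get ⟨j + 1, hj1⟩ < u.get ⟨j, by omega⟩ := by
    intro j hj1
    exact List.isChain_iff_getElem.mp hdec j (by omega)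
  have key : ∀ j (hj : j ≤ k),
      ((S j (by omega)).filter (· < u.get ⟨j, by omega⟩)).card + j < k := by
    intro j
    induction j with
    | zero =>
      intro _
      have hj0 : (0 : ℕ) < u.length := by omega
      have hmem0 := hmemS 0 hj0
      have hss : (S 0 hj0).filter (· < u.get ⟨0, hj0⟩) ⊂ S 0 hj0 := by
        refine ⟨Finset.filter_subset _ _, fun hc => ?_⟩
        have := Finset.mem_filter.mp (hc hmem0)
        omega
      have := Finset.card_lt_card hss
      rw [hcard _ (hSL 0 hj0)] at this
      omega
    | succ j ih =>
      intro hj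
      have hj1 : j + 1 < u.length := by omega
      have hj0 : j < u.length := by omega
      have h1 : (S (j + 1) hj1).filter (· < u.get ⟨j + 1, hj1⟩) ⊂
          (S (j + 1) hj1).filter (· < u.get ⟨j, hj0⟩) := by
        have hd := hdecu j hj1
        refine ⟨fun x hx => ?_, fun hc => ?_⟩
        · rw [Finset.mem_filter] at hx ⊢
          refine ⟨hx.1, ?_⟩
          have := hx.2
          omega
        have hm1 : u.get ⟨j + 1, hj1⟩ ∈ (S (j + 1) hj1).filter (· < u.get ⟨j, hj0⟩) :=
          Finset.mem_filter.mpr ⟨hmemS (j + 1) hj1, hd⟩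
        have := Finset.mem_filter.mp (hc hm1)
        omega
      have h2 := Finset.card_lt_card h1
      have h3 := cnt_mono (hFLE j hj1) (u.get ⟨j, hj0⟩)
      have h4 := ih (by omega)
      omega
  have := key k le_rfl
  omega
end

section
/- The map ρ_n respects the Knuth relations: for all a, b, c ∈ {1,...,n} with a < b ≤ c we have ρ_n(bca) = ρ_n(bac), and for all a ≤ b < c we have ρ_n(cab) = ρ_n(acb). Hence ρ_n induces a well-defined monoid homomorphism from the plactic monoid of rank n into tropical matrices indexed by 2^{[n]}. -/
namespace S8
lemma FLE.card {S T : Finset ℕ} (h : FLE S T) : S.card = T.card := h.1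

lemma FLE_refl (S : Finset ℕ) : FLE S S := ⟨rfl, fun _ _ => le_refl _⟩

lemma FLE_trans {S T U : Finset ℕ} (h1 : FLE S T) (h2 : FLE T U) : FLE S U := by
  refine ⟨h1.1.trans h2.1, fun i hi => ?_⟩
  exact (h1.2 i (h2.1 ▸ hi)).trans (h2.2 i hi)

lemma nthEl_lt_nthEl {S : Finset ℕ} {i j : ℕ} (hij : i < j) (hj : j < S.card) :
    nthEl S i < nthEl S j := by
  have hl : (S.sort (· ≤ ·)).length = S.card := Finset.length_sort _
  have hjl : j < (S.sort (· ≤ ·)).length := by rw [hl]; exact hj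
  have hil : i < (S.sort (· ≤ ·)).length := lt_trans hij hjl
  have := (Finset.sortedLT_sort S) (a := ⟨i, hil⟩) (b := ⟨j, hjl⟩) hij
  rw [nthEl, nthEl, List.getD_eq_getElem _ _ hil, List.getD_eq_getElem _ _ hjl]
  simpa [List.get_eq_getElem] using this

lemma nthEl_mem {S : Finset ℕ} {i : ℕ} (hi : i < S.card) : nthEl S i ∈ S := by
  have hl : i < (S.sort (· ≤ ·)).length := by rw [Finset.length_sort]; exact hi
  rw [nthEl, List.getD_eq_getElem _ _ hl]
  exact (Finset.mem_sort _).1 (List.getElem_mem hl)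

lemma mem_iff_nthEl {S : Finset ℕ} {x : ℕ} : x ∈ S ↔ ∃ i < S.card, nthEl S i = x := by
  constructor
  · intro hx
    have : x ∈ S.sort (· ≤ ·) := (Finset.mem_sort _).2 hx
    obtain ⟨⟨i, hi⟩, hg⟩ := List.mem_iff_get.1 this
    refine ⟨i, by rw [← Finset.length_sort (· ≤ ·)]; exact hi, ?_⟩
    rw [nthEl, List.getD_eq_getElem _ _ hi, ← hg, List.get_eq_getElem]
  · rintro ⟨i, hi, rfl⟩; exact nthEl_mem hi

lemma nthEl_add_le {S : Finset ℕ} {i d : ℕ} (h : i + d < S.card) :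
    nthEl S i + d ≤ nthEl S (i + d) := by
  induction d with
  | zero => simp
  | succ d ih =>
    have h1 : i + d < S.card := by omega
    have := nthEl_lt_nthEl (show i + d < i + (d+1) by omega) h
    have := ih h1
    omega

lemma nthEl_bounds {n : ℕ} {S : Finset ℕ} (hS : S ⊆ Finset.Icc 1 n) {i : ℕ}
    (hi : i < S.card) : i + 1 ≤ nthEl S i ∧ nthEl S i ≤ n := by
  have hm := hS (nthEl_mem hi)
  rw [Finset.mem_Icc] at hm
  have h0 : 1 ≤ nthEl S 0 := by
    have hm0 := hS (nthEl_mem (show 0 < S.card by omega))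
    rw [Finset.mem_Icc] at hm0; exact hm0.1
  have h2 := nthEl_add_le (S := S) (i := 0) (d := i) (by omega)
  rw [Nat.zero_add] at h2
  constructor
  · omega
  · exact hm.2

def seqSet (m : ℕ) (f : ℕ → ℕ) : Finset ℕ := ((List.range m).map f).toFinset

lemma sort_seqSet {m : ℕ} {f : ℕ → ℕ} (hf : ∀ i j, i < j → j < m → f i < f j) :
    (seqSet m f).sort (· ≤ ·) = (List.range m).map f := by
  have hnd : ((List.range m).map f).Nodup := by
    rw [List.nodup_iff_getElem?_ne_getElem?]
    intro i j hij hj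
    simp only [List.length_map, List.length_range] at hj
    rw [List.getElem?_eq_getElem (by simp; omega), List.getElem?_eq_getElem (by simp; omega)]
    simp only [List.getElem_map, List.getElem_range, ne_eq, Option.some.injEq]
    exact Nat.ne_of_lt (hf i j hij hj)
  have hsorted : ((List.range m).map f).Pairwise (· ≤ ·) := by
    rw [List.pairwise_iff_getElem]
    intro i j hi hj hij
    simp only [List.length_map, List.length_range] at hj
    simp only [List.getElem_map, List.getElem_range]
    exact le_of_lt (hf i j hij hj)
  exact (List.toFinset_sort (· ≤ ·) hnd).2 hsorted

lemma card_seqSet {m : ℕ} {f : ℕ → ℕ} (hf : ∀ i j, i < j → j < m → f i < f j) :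
    (seqSet m f).card = m := by
  have := sort_seqSet hf
  have h2 : ((seqSet m f).sort (· ≤ ·)).length = (seqSet m f).card := Finset.length_sort _
  rw [this] at h2
  simpa using h2.symm

lemma nthEl_seqSet {m : ℕ} {f : ℕ → ℕ} (hf : ∀ i j, i < j → j < m → f i < f j)
    {i : ℕ} (hi : i < m) : nthEl (seqSet m f) i = f i := by
  rw [nthEl, sort_seqSet hf, List.getD_eq_getElem _ _ (by simp [hi])]
  simp

lemma mem_seqSet {m : ℕ} {f : ℕ → ℕ} {x : ℕ} :
    x ∈ seqSet m f ↔ ∃ i, i < m ∧ f i = x := by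
  simp [seqSet, List.mem_map, List.mem_range]

lemma FLE_nth {S T : Finset ℕ} (h : FLE S T) {i : ℕ} (hi : i < S.card) :
    nthEl S i ≤ nthEl T i := h.2 i (h.1 ▸ hi)

lemma ins1 {n : ℕ} {S T : Finset ℕ} (hS : S ⊆ Finset.Icc 1 n) (hT : T ⊆ Finset.Icc 1 n)
    (hST : FLE S T) {p e : ℕ} (hp : p < S.card) (hSe : nthEl S p ≤ e) (heT : e ≤ nthEl T p) :
    ∃ V : Finset ℕ, V ⊆ Finset.Icc 1 n ∧ FLE S V ∧ FLE V T ∧ V.card = S.card ∧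
      nthEl V p = e ∧ (∀ t, t < p → nthEl V t = nthEl S t) ∧
      (∀ q, p < q → q < S.card → nthEl V q = max (nthEl S q) (e + (q - p))) := by
  classical
  set m := S.card with hm
  have hcT : T.card = m := hST.1.symm
  set f : ℕ → ℕ := fun t => if t < p then nthEl S t
    else if t = p then e else max (nthEl S t) (e + (t - p)) with hf
  have hfS : ∀ t, t < m → nthEl S t ≤ f t := by
    intro t ht
    simp only [hf]
    split_ifs with h1 h2
    · exact le_refl _
    · subst h2; exact hSe
    · exact le_max_left _ _
  have hfT : ∀ t, t < m → f t ≤ nthEl T t := by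
    intro t ht
    have hst := hST.2 t (by omega)
    simp only [hf]
    split_ifs with h1 h2
    · exact hst
    · subst h2; exact heT
    · have h3 : nthEl T p + (t - p) ≤ nthEl T t := by
        have h4 := nthEl_add_le (S := T) (i := p) (d := t - p) (by omega)
        have e2 : p + (t - p) = t := by omega
        rw [e2] at h4; exact h4
      omega
  have hmono : ∀ i j, i < j → j < m → f i < f j := by
    intro i j hij hj
    have hsij := nthEl_lt_nthEl (S := S) hij (by omega)
    simp only [hf]
    split_ifs <;> first
      | omega
      | (have hx := nthEl_lt_nthEl (S := S) (show i < p by omega) hp; omega)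
  refine ⟨seqSet m f, ?_, ?_, ?_, ?_, ?_, ?_, ?_⟩
  · intro x hx
    obtain ⟨i, hi, rfl⟩ := mem_seqSet.1 hx
    have b1 := nthEl_bounds hS (show i < S.card from hi)
    have b2 := nthEl_bounds hT (show i < T.card by omega)
    have := hfS i hi; have := hfT i hi
    rw [Finset.mem_Icc]; omega
  · refine ⟨(card_seqSet hmono).symm, fun i hi => ?_⟩
    rw [card_seqSet hmono] at hi
    rw [nthEl_seqSet hmono hi]; exact hfS i hi
  · refine ⟨by rw [card_seqSet hmono, hcT], fun i hi => ?_⟩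
    rw [hcT] at hi
    rw [nthEl_seqSet hmono hi]; exact hfT i hi
  · exact card_seqSet hmono
  · rw [nthEl_seqSet hmono hp]; simp [hf]
  · intro t ht
    rw [nthEl_seqSet hmono (by omega)]; simp [hf, ht]
  · intro q hq hqm
    rw [nthEl_seqSet hmono hqm]
    simp only [hf]
    rw [if_neg (by omega), if_neg (by omega)]

lemma ins2 {n : ℕ} {S T : Finset ℕ} (hS : S ⊆ Finset.Icc 1 n) (hT : T ⊆ Finset.Icc 1 n)
    (hST : FLE S T) {p e : ℕ} (hp : p < S.card) (hSe : nthEl S p ≤ e) (heT : e ≤ nthEl T p) :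
    ∃ V : Finset ℕ, V ⊆ Finset.Icc 1 n ∧ FLE S V ∧ FLE V T ∧ V.card = S.card ∧
      nthEl V p = e ∧ (∀ t, p < t → t < S.card → nthEl V t = nthEl T t) := by
  classical
  set m := S.card with hm
  have hcT : T.card = m := hST.1.symm
  set f : ℕ → ℕ := fun t => if t < p then min (nthEl T t) (e - (p - t))
    else if t = p then e else nthEl T t with hf
  have hep : p + 1 ≤ e := by
    have := (nthEl_bounds hS hp).1; omega
  have hfS : ∀ t, t < m → nthEl S t ≤ f t := by
    intro t ht
    simp only [hf]
    split_ifs with h1 h2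
    · have h3 : nthEl S t + (p - t) ≤ nthEl S p := by
        have h4 := nthEl_add_le (S := S) (i := t) (d := p - t) (by omega)
        have e2 : t + (p - t) = p := by omega
        rw [e2] at h4; exact h4
      have h5 := hST.2 t (by omega)
      omega
    · subst h2; exact hSe
    · exact (hST.2 t (by omega)).trans (le_refl _)
  have hfT : ∀ t, t < m → f t ≤ nthEl T t := by
    intro t ht
    simp only [hf]
    split_ifs with h1 h2
    · exact min_le_left _ _
    · subst h2; exact heT
    · exact le_refl _
  have hmono : ∀ i j, i < j → j < m → f i < f j := by
    intro i j hij hj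
    have htij := nthEl_lt_nthEl (S := T) hij (by omega)
    simp only [hf]
    split_ifs <;> first
      | omega
      | (have hx := nthEl_lt_nthEl (S := T) (show p < j by omega) (by omega); omega)
  refine ⟨seqSet m f, ?_, ?_, ?_, ?_, ?_, ?_⟩
  · intro x hx
    obtain ⟨i, hi, rfl⟩ := mem_seqSet.1 hx
    have b1 := nthEl_bounds hS (show i < S.card from hi)
    have b2 := nthEl_bounds hT (show i < T.card by omega)
    have := hfS i hi; have := hfT i hi
    rw [Finset.mem_Icc]; omega
  · refine ⟨(card_seqSet hmono).symm, fun i hi => ?_⟩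
    rw [card_seqSet hmono] at hi
    rw [nthEl_seqSet hmono hi]; exact hfS i hi
  · refine ⟨by rw [card_seqSet hmono, hcT], fun i hi => ?_⟩
    rw [hcT] at hi
    rw [nthEl_seqSet hmono hi]; exact hfT i hi
  · exact card_seqSet hmono
  · rw [nthEl_seqSet hmono hp]; simp [hf]
  · intro t ht htm
    rw [nthEl_seqSet hmono htm]
    simp only [hf]
    rw [if_neg (by omega), if_neg (by omega)]

lemma nthEl_mono {S : Finset ℕ} {i j : ℕ} (hij : i ≤ j) (hj : j < S.card) :
    nthEl S i ≤ nthEl S j := by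
  rcases eq_or_lt_of_le hij with h | h
  · rw [h]
  · exact le_of_lt (nthEl_lt_nthEl h hj)

lemma idx_lt {S : Finset ℕ} {i j : ℕ} (hi : i < S.card) (hj : j < S.card)
    (h : nthEl S i < nthEl S j) : i < j := by
  by_contra h'
  have := nthEl_mono (show j ≤ i by omega) hi
  omega

lemma idx_of_mem {S : Finset ℕ} {x : ℕ} (hx : x ∈ S) :
    ∃ i, i < S.card ∧ nthEl S i = x := by
  obtain ⟨i, hi, h⟩ := mem_iff_nthEl.1 hx
  exact ⟨i, hi, h⟩

lemma W1 {n : ℕ} {X Y : Finset ℕ} (hX : X ⊆ Finset.Icc 1 n) (hY : Y ⊆ Finset.Icc 1 n)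
    (hXY : FLE X Y) {a c : ℕ} (hc : c ∈ X) (ha : a ∈ Y) (hac : a < c) :
    ∃ V, V ⊆ Finset.Icc 1 n ∧ FLE X V ∧ FLE V Y ∧ a ∈ V ∧ c ∈ V := by
  obtain ⟨γ, hγX, hγ⟩ := idx_of_mem hc
  obtain ⟨α, hαY, hα⟩ := idx_of_mem ha
  have hcard : Y.card = X.card := hXY.1.symm
  have hαγ : α < γ := by
    apply idx_lt (S := Y) hαY (by omega)
    have h1 : nthEl X γ ≤ nthEl Y γ := FLE_nth hXY hγX
    omega
  have key : ∀ δ, δ < γ → nthEl X δ ≤ a → a ≤ nthEl Y δ → a + (γ - δ) ≤ c → 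
      ∃ V, V ⊆ Finset.Icc 1 n ∧ FLE X V ∧ FLE V Y ∧ a ∈ V ∧ c ∈ V := by
    intro δ hδγ h1 h2 h3
    obtain ⟨V, hVsub, hXV, hVY, hVcard, hVδ, _, hVabove⟩ :=
      ins1 hX hY hXY (p := δ) (e := a) (by omega) h1 h2
    refine ⟨V, hVsub, hXV, hVY, ?_, ?_⟩
    · rw [← hVδ]; exact nthEl_mem (by omega)
    · have h4 : nthEl V γ = c := by
        rw [hVabove γ hδγ hγX, hγ]; omega
      rw [← h4]; exact nthEl_mem (by omega)
  rcases le_or_gt (γ - (c - a)) α with h | h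
  · refine key α hαγ ?_ ?_ ?_
    · have := FLE_nth hXY (show α < X.card by omega); omega
    · omega
    · omega
  · have hδγ : γ - (c - a) < γ := by omega
    refine key (γ - (c - a)) hδγ ?_ ?_ ?_
    · have h4 := nthEl_add_le (S := X) (i := γ - (c - a)) (d := γ - (γ - (c - a))) (by omega)
      have e2 : γ - (c - a) + (γ - (γ - (c - a))) = γ := by omega
      rw [e2] at h4; omega
    · have := nthEl_lt_nthEl (S := Y) (show α < γ - (c-a) from h) (by omega); omega
    · omega

lemma W2 {n : ℕ} {X Y : Finset ℕ} (hX : X ⊆ Finset.Icc 1 n) (hY : Y ⊆ Finset.Icc 1 n)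
    (hXY : FLE X Y) {a c α γ : ℕ} (hαX : α < X.card) (hα : nthEl X α = a)
    (hγY : γ < Y.card) (hγ : nthEl Y γ = c) (hαγ : α < γ) :
    ∃ V, V ⊆ Finset.Icc 1 n ∧ FLE X V ∧ FLE V Y ∧ a ∈ V ∧ c ∈ V := by
  have hcard : Y.card = X.card := hXY.1.symm
  obtain ⟨V, hVsub, hXV, hVY, hVcard, hVα, hVabove⟩ :=
    ins2 hX hY hXY (p := α) (e := a) hαX (le_of_eq hα) (by have := FLE_nth hXY hαX; omega)
  refine ⟨V, hVsub, hXV, hVY, ?_, ?_⟩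
  · rw [← hVα]; exact nthEl_mem (by omega)
  · have h4 : nthEl V γ = c := by rw [hVabove γ hαγ (by omega)]; exact hγ
    rw [← h4]; exact nthEl_mem (by omega)

lemma W3 {n : ℕ} {B A C : Finset ℕ} (hB : B ⊆ Finset.Icc 1 n) (hA : A ⊆ Finset.Icc 1 n)
    (hC : C ⊆ Finset.Icc 1 n) (hBA : FLE B A) (hAC : FLE A C)
    {a b c α γ : ℕ} (hb : b ∈ B) (hαA : α < A.card) (hα : nthEl A α = a)
    (hγC : γ < C.card) (hγ : nthEl C γ = c) (hab : a < b) (hbc : b ≤ c) (hγα : γ ≤ α) :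
    ∃ V W, V ⊆ Finset.Icc 1 n ∧ W ⊆ Finset.Icc 1 n ∧ FLE B V ∧ FLE V W ∧ FLE W C ∧
      c ∈ V ∧ a ∈ W := by
  obtain ⟨β, hβB, hβ⟩ := idx_of_mem hb
  have hcBA : B.card = A.card := hBA.1
  have hcAC : A.card = C.card := hAC.1
  have hβα : α < β := by
    apply idx_lt (S := A) hαA (by omega)
    have h1 : nthEl B β ≤ nthEl A β := FLE_nth hBA hβB
    omega
  have hCα : a < nthEl C α := by
    have := nthEl_mono (S := C) hγα (by omega); omega
  obtain ⟨W, hWsub, hAW, hWC, hWcard, hWα, hWabove⟩ :=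
    ins2 hA hC hAC (p := α) (e := a) hαA (le_of_eq hα) (le_of_lt hCα)
  have hα1 : α + 1 < A.card := by omega
  have hBW : FLE B W := FLE_trans hBA hAW
  have hBα1 : nthEl B (α+1) ≤ c := by
    have := nthEl_mono (S := B) (show α + 1 ≤ β by omega) (by omega); omega
  have hWα1 : c ≤ nthEl W (α+1) := by
    rw [hWabove (α+1) (by omega) (by omega)]
    have := nthEl_mono (S := C) (show γ ≤ α + 1 by omega) (by omega); omega
  obtain ⟨V, hVsub, hBV, hVW, hVcard, hVα1, _⟩ :=
    ins2 hB hWsub hBW (p := α+1) (e := c) (by omega) hBα1 hWα1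
  refine ⟨V, W, hVsub, hWsub, hBV, hVW, hWC, ?_, ?_⟩
  · rw [← hVα1]; exact nthEl_mem (by omega)
  · rw [← hWα]; exact nthEl_mem (by omega)

lemma W4 {n : ℕ} {X Y : Finset ℕ} (hX : X ⊆ Finset.Icc 1 n) (hY : Y ⊆ Finset.Icc 1 n)
    (hXY : FLE X Y) {a b c : ℕ} (ha : a ∈ X) (hc : c ∈ Y)
    (hab : a ≤ b) (hbc : b ≤ c) (hac : a < c) :
    (∃ V, V ⊆ Finset.Icc 1 n ∧ FLE X V ∧ FLE V Y ∧ b ∈ V) ∨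
    (∃ V W, V ⊆ Finset.Icc 1 n ∧ W ⊆ Finset.Icc 1 n ∧ FLE X V ∧ FLE V W ∧ FLE W Y ∧
      c ∈ V ∧ a ∈ W) := by
  obtain ⟨α, hαX, hα⟩ := idx_of_mem ha
  obtain ⟨γ, hγY, hγ⟩ := idx_of_mem hc
  have hcard : Y.card = X.card := hXY.1.symm
  by_cases hbγ : nthEl X γ ≤ b
  · left
    obtain ⟨V, hVsub, hXV, hVY, hVcard, hVγ, _, _⟩ :=
      ins1 hX hY hXY (p := γ) (e := b) (by omega) hbγ (by omega)
    exact ⟨V, hVsub, hXV, hVY, by rw [← hVγ]; exact nthEl_mem (by omega)⟩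
  · right
    have hαγ : α < γ := by
      apply idx_lt (S := X) hαX (by omega); omega
    obtain ⟨V, hVsub, hXV, hVY, hVcard, hVγ, hVbelow, _⟩ :=
      ins1 hX hY hXY (p := γ) (e := c) (by omega) (by have := FLE_nth hXY (show γ < X.card by omega); omega) (by omega)
    obtain ⟨W, hWsub, hXW, hWY, hWcard, hWα, hWabove⟩ :=
      ins2 hX hY hXY (p := α) (e := a) hαX (le_of_eq hα) (by have := FLE_nth hXY hαX; omega)
    have hVW : FLE V W := by
      refine ⟨by omega, fun i hi => ?_⟩
      rcases lt_or_ge i γ with h | h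
      · rw [hVbelow i h]
        exact FLE_nth hXW (by omega)
      · have h1 : nthEl W i = nthEl Y i := hWabove i (by omega) (by omega)
        have h2 : nthEl V i ≤ nthEl Y i := FLE_nth hVY (by omega)
        omega
    refine ⟨V, W, hVsub, hWsub, hXV, hVW, hWY, ?_, ?_⟩
    · rw [← hVγ]; exact nthEl_mem (by omega)
    · rw [← hWα]; exact nthEl_mem (by omega)

lemma W5 {n : ℕ} {A C B : Finset ℕ} (hA : A ⊆ Finset.Icc 1 n) (hC : C ⊆ Finset.Icc 1 n)
    (hB : B ⊆ Finset.Icc 1 n) (hAC : FLE A C) (hCB : FLE C B)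
    {a b c : ℕ} (ha : a ∈ A) (hc : c ∈ C) (hb : b ∈ B) (hab : a ≤ b) (hbc : b < c) :
    ∃ V, V ⊆ Finset.Icc 1 n ∧ FLE A V ∧ FLE V B ∧ a ∈ V ∧ c ∈ V := by
  obtain ⟨α, hαA, hα⟩ := idx_of_mem ha
  obtain ⟨γ, hγC, hγ⟩ := idx_of_mem hc
  obtain ⟨β, hβB, hβ⟩ := idx_of_mem hb
  have hcAC : A.card = C.card := hAC.1
  have hcCB : C.card = B.card := hCB.1
  have hAB : FLE A B := FLE_trans hAC hCB
  have hβγ : β < γ := by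
    apply idx_lt (S := B) hβB (by omega)
    have := FLE_nth hCB (show γ < C.card by omega); omega
  have key : ∀ δ, δ < γ → nthEl A δ ≤ a → a ≤ nthEl B δ → a + (γ - δ) ≤ c →
      ∃ V, V ⊆ Finset.Icc 1 n ∧ FLE A V ∧ FLE V B ∧ a ∈ V ∧ c ∈ V := by
    intro δ hδγ h1 h2 h3
    obtain ⟨Va, hVasub, hAVa, hVaB, hVacard, hVaδ, _, hVaabove⟩ :=
      ins1 hA hB hAB (p := δ) (e := a) (by omega) h1 h2
    have hVaγ : nthEl Va γ ≤ c := by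
      rw [hVaabove γ hδγ (by omega)]
      have := FLE_nth hAC (show γ < A.card by omega); omega
    have hBγ : c ≤ nthEl B γ := by
      have := FLE_nth hCB (show γ < C.card by omega); omega
    obtain ⟨V, hVsub, hVaV, hVB, hVcard, hVγ, hVbelow, _⟩ :=
      ins1 hVasub hB hVaB (p := γ) (e := c) (by omega) hVaγ hBγ
    refine ⟨V, hVsub, FLE_trans hAVa hVaV, hVB, ?_, ?_⟩
    · have h4 : nthEl V δ = a := by rw [hVbelow δ hδγ]; exact hVaδ
      rw [← h4]; exact nthEl_mem (by omega)
    · rw [← hVγ]; exact nthEl_mem (by omega)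
  rcases lt_or_ge α γ with h1 | h1
  · rcases le_or_gt (γ - (c - a)) α with h2 | h2
    · refine key α h1 (le_of_eq hα) ?_ (by omega)
      have := FLE_nth hAB hαA; omega
    · refine key (γ - (c - a)) (by omega) ?_ ?_ (by omega)
      · have h4 := nthEl_add_le (S := A) (i := γ - (c - a)) (d := γ - (γ - (c - a))) (by omega)
        have e2 : γ - (c - a) + (γ - (γ - (c - a))) = γ := by omega
        rw [e2] at h4
        have := FLE_nth hAC (show γ < A.card by omega); omega
      · have h5 := nthEl_lt_nthEl (S := B) (show α < γ - (c - a) from h2) (by omega)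
        have := FLE_nth hAB hαA; omega
  · have hγ1 : (1:ℕ) ≤ γ := by omega
    refine key (γ - 1) (by omega) ?_ ?_ (by omega)
    · have := nthEl_lt_nthEl (S := A) (show γ - 1 < α by omega) hαA; omega
    · have := nthEl_mono (S := B) (show β ≤ γ - 1 by omega) (by omega); omega

def Rdbl (n x : ℕ) (S T : Finset ℕ) : Prop :=
  ∃ U : Finset ℕ, U ⊆ Finset.Icc 1 n ∧ FLE S U ∧ FLE U T ∧ x ∈ U

lemma rdbl_of {n x : ℕ} {S T U : Finset ℕ} (hU : U ⊆ Finset.Icc 1 n) (h1 : FLE S U)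
    (h2 : FLE U T) (hx : x ∈ U) : Rdbl n x S T := ⟨U, hU, h1, h2, hx⟩

lemma rdbl_mono {n x : ℕ} {S T S' T' : Finset ℕ} (h1 : FLE S' S) (h2 : FLE T T')
    (h : Rdbl n x S T) : Rdbl n x S' T' := by
  obtain ⟨U, hU, ha, hb, hx⟩ := h
  exact ⟨U, hU, FLE_trans h1 ha, FLE_trans hb h2, hx⟩

lemma rhoGen_of_not {n x : ℕ} {P Q : Finset ℕ} (h : ¬ FLE P Q) :
    rhoGen n x P Q = ⊥ := by
  rw [rhoGen, if_neg h]

open Classical in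
lemma rhoGen_eq_ind {n x : ℕ} {P Q : Finset ℕ} (h : FLE P Q) :
    rhoGen n x P Q = (((if Rdbl n x P Q then (1:ℝ) else 0) : ℝ) : WithBot ℝ) := by
  have hiff : (∃ S ⊆ Finset.Icc 1 n, FLE P S ∧ FLE S Q ∧ x ∈ S) = Rdbl n x P Q := rfl
  rw [rhoGen, if_pos h]
  simp only [hiff]
  by_cases h2 : Rdbl n x P Q
  · rw [if_pos h2, if_pos h2]; rfl
  · rw [if_neg h2, if_neg h2]; rfl

open Classical in
noncomputable def cnt (n x y z : ℕ) (P A B C : Finset ℕ) : ℕ :=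
  (if Rdbl n x P A then 1 else 0) + (if Rdbl n y A B then 1 else 0) +
    (if Rdbl n z B C then 1 else 0)

lemma cnt_ge_1 {n x y z : ℕ} {P A B C : Finset ℕ} (h : Rdbl n x P A) :
    1 ≤ cnt n x y z P A B C := by
  unfold cnt; rw [if_pos h]; split_ifs <;> omega

lemma cnt_ge_2 {n x y z : ℕ} {P A B C : Finset ℕ} (h : Rdbl n y A B) :
    1 ≤ cnt n x y z P A B C := by
  unfold cnt; rw [if_pos h]; split_ifs <;> omega

lemma cnt_ge_3 {n x y z : ℕ} {P A B C : Finset ℕ} (h : Rdbl n z B C) :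
    1 ≤ cnt n x y z P A B C := by
  unfold cnt; rw [if_pos h]; split_ifs <;> omega

lemma cnt_ge_12 {n x y z : ℕ} {P A B C : Finset ℕ} (h1 : Rdbl n x P A) (h2 : Rdbl n y A B) :
    2 ≤ cnt n x y z P A B C := by
  unfold cnt; rw [if_pos h1, if_pos h2]; split_ifs <;> omega

lemma cnt_ge_13 {n x y z : ℕ} {P A B C : Finset ℕ} (h1 : Rdbl n x P A) (h3 : Rdbl n z B C) :
    2 ≤ cnt n x y z P A B C := by
  unfold cnt; rw [if_pos h1, if_pos h3]; split_ifs <;> omega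

lemma cnt_ge_23 {n x y z : ℕ} {P A B C : Finset ℕ} (h2 : Rdbl n y A B) (h3 : Rdbl n z B C) :
    2 ≤ cnt n x y z P A B C := by
  unfold cnt; rw [if_pos h2, if_pos h3]; split_ifs <;> omega

lemma cnt_ge_123 {n x y z : ℕ} {P A B C : Finset ℕ} (h1 : Rdbl n x P A) (h2 : Rdbl n y A B)
    (h3 : Rdbl n z B C) : 3 ≤ cnt n x y z P A B C := by
  unfold cnt; rw [if_pos h1, if_pos h2, if_pos h3]

lemma key_le (n x y z x' y' z' : ℕ)
    (H : ∀ P R1 R2 R3 : Finset ℕ, R1 ⊆ Finset.Icc 1 n → R2 ⊆ Finset.Icc 1 n →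
      R3 ⊆ Finset.Icc 1 n → FLE P R1 → FLE R1 R2 → FLE R2 R3 →
      ∃ S1 S2 : Finset ℕ, S1 ⊆ Finset.Icc 1 n ∧ S2 ⊆ Finset.Icc 1 n ∧ FLE P S1 ∧
        FLE S1 S2 ∧ FLE S2 R3 ∧ cnt n x y z P R1 R2 R3 ≤ cnt n x' y' z' P S1 S2 R3)
    (M : Finset ℕ → Finset ℕ → WithBot ℝ) (P Q : Finset ℕ) :
    tmul n (rhoGen n x) (tmul n (rhoGen n y) (tmul n (rhoGen n z) M)) P Q ≤
    tmul n (rhoGen n x') (tmul n (rhoGen n y') (tmul n (rhoGen n z') M)) P Q := by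
  classical
  simp only [tmul]
  apply Finset.sup_le
  intro R1 hR1pow
  obtain ⟨R2, hR2pow, e2⟩ := Finset.exists_mem_eq_sup _ (Finset.powerset_nonempty _)
    (fun R => rhoGen n y R1 R + ((Finset.Icc 1 n).powerset.sup fun R' => rhoGen n z R R' + M R' Q))
  rw [e2]
  obtain ⟨R3, hR3pow, e3⟩ := Finset.exists_mem_eq_sup _ (Finset.powerset_nonempty _)
    (fun R' => rhoGen n z R2 R' + M R' Q)
  rw [e3]
  have hR1 : R1 ⊆ Finset.Icc 1 n := Finset.mem_powerset.1 hR1pow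
  have hR2 : R2 ⊆ Finset.Icc 1 n := Finset.mem_powerset.1 hR2pow
  have hR3 : R3 ⊆ Finset.Icc 1 n := Finset.mem_powerset.1 hR3pow
  by_cases f1 : FLE P R1
  swap
  · rw [rhoGen_of_not f1, WithBot.bot_add]; exact bot_le
  by_cases f2 : FLE R1 R2
  swap
  · rw [rhoGen_of_not f2, WithBot.bot_add, WithBot.add_bot]; exact bot_le
  by_cases f3 : FLE R2 R3
  swap
  · rw [rhoGen_of_not f3, WithBot.bot_add, WithBot.add_bot, WithBot.add_bot]; exact bot_le
  cases hM : M R3 Q with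
  | bot =>
    rw [WithBot.add_bot, WithBot.add_bot, WithBot.add_bot]; exact bot_le
  | coe r =>
    obtain ⟨S1, S2, hS1, hS2, g1, g2, g3, hcnt⟩ := H P R1 R2 R3 hR1 hR2 hR3 f1 f2 f3
    have target_le : rhoGen n x' P S1 + (rhoGen n y' S1 S2 + (rhoGen n z' S2 R3 + (r : WithBot ℝ))) ≤
        (Finset.Icc 1 n).powerset.sup fun R =>
          rhoGen n x' P R + ((Finset.Icc 1 n).powerset.sup fun R' =>
            rhoGen n y' R R' + ((Finset.Icc 1 n).powerset.sup fun R'' =>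
              rhoGen n z' R' R'' + M R'' Q)) := by
      have s3 : rhoGen n z' S2 R3 + (r : WithBot ℝ) ≤
          (Finset.Icc 1 n).powerset.sup fun R'' => rhoGen n z' S2 R'' + M R'' Q := by
        have := Finset.le_sup (f := fun R'' => rhoGen n z' S2 R'' + M R'' Q) hR3pow
        simp only [hM] at this; exact this
      have s2 : rhoGen n y' S1 S2 + (rhoGen n z' S2 R3 + (r : WithBot ℝ)) ≤
          (Finset.Icc 1 n).powerset.sup fun R' => rhoGen n y' S1 R' +
            ((Finset.Icc 1 n).powerset.sup fun R'' => rhoGen n z' R' R'' + M R'' Q) := by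
        refine le_trans (add_le_add_right s3 _) ?_
        exact Finset.le_sup (f := fun R' => rhoGen n y' S1 R' +
          ((Finset.Icc 1 n).powerset.sup fun R'' => rhoGen n z' R' R'' + M R'' Q))
          (Finset.mem_powerset.2 hS2)
      refine le_trans (add_le_add_right s2 _) ?_
      exact Finset.le_sup (f := fun R => rhoGen n x' P R +
        ((Finset.Icc 1 n).powerset.sup fun R' => rhoGen n y' R R' +
          ((Finset.Icc 1 n).powerset.sup fun R'' => rhoGen n z' R' R'' + M R'' Q)))
        (Finset.mem_powerset.2 hS1)
    refine le_trans ?_ target_le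
    rw [rhoGen_eq_ind f1, rhoGen_eq_ind f2, rhoGen_eq_ind f3,
      rhoGen_eq_ind g1, rhoGen_eq_ind g2, rhoGen_eq_ind g3]
    rw [← WithBot.coe_add, ← WithBot.coe_add, ← WithBot.coe_add, ← WithBot.coe_add,
      ← WithBot.coe_add, ← WithBot.coe_add]
    rw [WithBot.coe_le_coe]
    unfold cnt at hcnt
    split_ifs at hcnt ⊢ <;> (try norm_num at hcnt ⊢) <;> (try linarith)

lemma HI1 {n a b c : ℕ} (h2 : a < b) (h3 : b ≤ c) :
    ∀ P R1 R2 R3 : Finset ℕ, R1 ⊆ Finset.Icc 1 n → R2 ⊆ Finset.Icc 1 n →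
      R3 ⊆ Finset.Icc 1 n → FLE P R1 → FLE R1 R2 → FLE R2 R3 →
      ∃ S1 S2 : Finset ℕ, S1 ⊆ Finset.Icc 1 n ∧ S2 ⊆ Finset.Icc 1 n ∧ FLE P S1 ∧
        FLE S1 S2 ∧ FLE S2 R3 ∧ cnt n b c a P R1 R2 R3 ≤ cnt n b a c P S1 S2 R3 := by
  intro P R1 R2 R3 hR1 hR2 hR3 f1 f2 f3
  have hac : a < c := lt_of_lt_of_le h2 h3
  by_cases i2 : Rdbl n c R1 R2 <;> by_cases i3 : Rdbl n a R2 R3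
  · -- i2, i3 : use W1
    obtain ⟨Uc, hUc, hR1Uc, hUcR2, hcUc⟩ := id i2
    obtain ⟨Ua, hUa, hR2Ua, hUaR3, haUa⟩ := id i3
    obtain ⟨V, hV, hUcV, hVUa, haV, hcV⟩ :=
      W1 hUc hUa (FLE_trans hUcR2 hR2Ua) hcUc haUa hac
    have hPV : FLE P V := FLE_trans f1 (FLE_trans hR1Uc hUcV)
    have hVR3 : FLE V R3 := FLE_trans hVUa hUaR3
    refine ⟨V, V, hV, hV, hPV, FLE_refl V, hVR3, ?_⟩
    have r2 : Rdbl n a V V := rdbl_of hV (FLE_refl V) (FLE_refl V) haV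
    have r3 : Rdbl n c V R3 := rdbl_of hV (FLE_refl V) hVR3 hcV
    by_cases i1 : Rdbl n b P R1
    · have r1 : Rdbl n b P V := rdbl_mono (FLE_refl P) (FLE_trans hR1Uc hUcV) i1
      have hL : cnt n b c a P R1 R2 R3 = 3 := by simp [cnt, i1, i2, i3]
      rw [hL]; exact cnt_ge_123 r1 r2 r3
    · have hL : cnt n b c a P R1 R2 R3 = 2 := by simp [cnt, i1, i2, i3]
      rw [hL]; exact cnt_ge_23 r2 r3
  · -- i2, ¬i3 : shift c to last slot
    obtain ⟨Uc, hUc, hR1Uc, hUcR2, hcUc⟩ := id i2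
    refine ⟨R1, R1, hR1, hR1, f1, FLE_refl R1, FLE_trans f2 f3, ?_⟩
    have r3 : Rdbl n c R1 R3 := ⟨Uc, hUc, hR1Uc, FLE_trans hUcR2 f3, hcUc⟩
    by_cases i1 : Rdbl n b P R1
    · have hL : cnt n b c a P R1 R2 R3 = 2 := by simp [cnt, i1, i2, i3]
      rw [hL]; exact cnt_ge_13 i1 r3
    · have hL : cnt n b c a P R1 R2 R3 = 1 := by simp [cnt, i1, i2, i3]
      rw [hL]; exact cnt_ge_3 r3
  · -- ¬i2, i3 : a in middle slot
    obtain ⟨Ua, hUa, hR2Ua, hUaR3, haUa⟩ := id i3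
    refine ⟨R2, Ua, hR2, hUa, FLE_trans f1 f2, hR2Ua, hUaR3, ?_⟩
    have r2 : Rdbl n a R2 Ua := rdbl_of hUa hR2Ua (FLE_refl Ua) haUa
    by_cases i1 : Rdbl n b P R1
    · have r1 : Rdbl n b P R2 := rdbl_mono (FLE_refl P) f2 i1
      have hL : cnt n b c a P R1 R2 R3 = 2 := by simp [cnt, i1, i2, i3]
      rw [hL]; exact cnt_ge_12 r1 r2
    · have hL : cnt n b c a P R1 R2 R3 = 1 := by simp [cnt, i1, i2, i3]
      rw [hL]; exact cnt_ge_2 r2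
  · -- ¬i2, ¬i3
    refine ⟨R1, R2, hR1, hR2, f1, f2, f3, ?_⟩
    by_cases i1 : Rdbl n b P R1
    · have hL : cnt n b c a P R1 R2 R3 = 1 := by simp [cnt, i1, i2, i3]
      rw [hL]; exact cnt_ge_1 i1
    · have hL : cnt n b c a P R1 R2 R3 = 0 := by simp [cnt, i1, i2, i3]
      omega

lemma HI2 {n a b c : ℕ} (h2 : a < b) (h3 : b ≤ c) :
    ∀ P R1 R2 R3 : Finset ℕ, R1 ⊆ Finset.Icc 1 n → R2 ⊆ Finset.Icc 1 n →
      R3 ⊆ Finset.Icc 1 n → FLE P R1 → FLE R1 R2 → FLE R2 R3 →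
      ∃ S1 S2 : Finset ℕ, S1 ⊆ Finset.Icc 1 n ∧ S2 ⊆ Finset.Icc 1 n ∧ FLE P S1 ∧
        FLE S1 S2 ∧ FLE S2 R3 ∧ cnt n b a c P R1 R2 R3 ≤ cnt n b c a P S1 S2 R3 := by
  intro P R1 R2 R3 hR1 hR2 hR3 f1 f2 f3
  have hac : a < c := lt_of_lt_of_le h2 h3
  by_cases i2 : Rdbl n a R1 R2 <;> by_cases i3 : Rdbl n c R2 R3
  · -- i2, i3
    obtain ⟨Ua, hUa, hR1Ua, hUaR2, haUa⟩ := id i2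
    obtain ⟨Uc, hUc, hR2Uc, hUcR3, hcUc⟩ := id i3
    have hUaUc : FLE Ua Uc := FLE_trans hUaR2 hR2Uc
    by_cases i1 : Rdbl n b P R1
    · obtain ⟨Ub, hUb, hPUb, hUbR1, hbUb⟩ := id i1
      obtain ⟨α, hαUa, hα⟩ := idx_of_mem haUa
      obtain ⟨γ, hγUc, hγ⟩ := idx_of_mem hcUc
      rcases lt_or_ge α γ with hαγ | hγα
      · obtain ⟨V, hV, hUaV, hVUc, haV, hcV⟩ := W2 hUa hUc hUaUc hαUa hα hγUc hγ hαγ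
        have hUbV : FLE Ub V := FLE_trans hUbR1 (FLE_trans hR1Ua hUaV)
        have hVR3 : FLE V R3 := FLE_trans hVUc hUcR3
        refine ⟨Ub, V, hUb, hV, hPUb, hUbV, hVR3, ?_⟩
        have r1 : Rdbl n b P Ub := rdbl_of hUb hPUb (FLE_refl Ub) hbUb
        have r2 : Rdbl n c Ub V := rdbl_of hV hUbV (FLE_refl V) hcV
        have r3 : Rdbl n a V R3 := rdbl_of hV (FLE_refl V) hVR3 haV
        have hL : cnt n b a c P R1 R2 R3 = 3 := by simp [cnt, i1, i2, i3]
        rw [hL]; exact cnt_ge_123 r1 r2 r3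
      · obtain ⟨V, W, hV, hW, hUbV, hVW, hWUc, hcV, haW⟩ :=
          W3 hUb hUa hUc (FLE_trans hUbR1 hR1Ua) hUaUc hbUb hαUa hα hγUc hγ h2 h3 hγα
        have hWR3 : FLE W R3 := FLE_trans hWUc hUcR3
        refine ⟨Ub, W, hUb, hW, hPUb, FLE_trans hUbV hVW, hWR3, ?_⟩
        have r1 : Rdbl n b P Ub := rdbl_of hUb hPUb (FLE_refl Ub) hbUb
        have r2 : Rdbl n c Ub W := rdbl_of hV hUbV hVW hcV
        have r3 : Rdbl n a W R3 := rdbl_of hW (FLE_refl W) hWR3 haW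
        have hL : cnt n b a c P R1 R2 R3 = 3 := by simp [cnt, i1, i2, i3]
        rw [hL]; exact cnt_ge_123 r1 r2 r3
    · rcases W4 hUa hUc hUaUc haUa hcUc (le_of_lt h2) h3 hac with
        ⟨V, hV, hUaV, hVUc, hbV⟩ | ⟨V, W, hV, hW, hUaV, hVW, hWUc, hcV, haW⟩
      · have hPV : FLE P V := FLE_trans f1 (FLE_trans hR1Ua hUaV)
        refine ⟨V, Uc, hV, hUc, hPV, hVUc, hUcR3, ?_⟩
        have r1 : Rdbl n b P V := rdbl_of hV hPV (FLE_refl V) hbV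
        have r2 : Rdbl n c V Uc := rdbl_of hUc hVUc (FLE_refl Uc) hcUc
        have hL : cnt n b a c P R1 R2 R3 = 2 := by simp [cnt, i1, i2, i3]
        rw [hL]; exact cnt_ge_12 r1 r2
      · have hPUa : FLE P Ua := FLE_trans f1 hR1Ua
        have hWR3 : FLE W R3 := FLE_trans hWUc hUcR3
        refine ⟨Ua, W, hUa, hW, hPUa, FLE_trans hUaV hVW, hWR3, ?_⟩
        have r2 : Rdbl n c Ua W := rdbl_of hV hUaV hVW hcV
        have r3 : Rdbl n a W R3 := rdbl_of hW (FLE_refl W) hWR3 haW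
        have hL : cnt n b a c P R1 R2 R3 = 2 := by simp [cnt, i1, i2, i3]
        rw [hL]; exact cnt_ge_23 r2 r3
  · -- i2, ¬i3 : put a in last slot
    obtain ⟨Ua, hUa, hR1Ua, hUaR2, haUa⟩ := id i2
    refine ⟨R1, Ua, hR1, hUa, f1, hR1Ua, FLE_trans hUaR2 f3, ?_⟩
    have r3 : Rdbl n a Ua R3 := rdbl_of hUa (FLE_refl Ua) (FLE_trans hUaR2 f3) haUa
    by_cases i1 : Rdbl n b P R1
    · have hL : cnt n b a c P R1 R2 R3 = 2 := by simp [cnt, i1, i2, i3]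
      rw [hL]; exact cnt_ge_13 i1 r3
    · have hL : cnt n b a c P R1 R2 R3 = 1 := by simp [cnt, i1, i2, i3]
      rw [hL]; exact cnt_ge_3 r3
  · -- ¬i2, i3 : c in middle slot
    obtain ⟨Uc, hUc, hR2Uc, hUcR3, hcUc⟩ := id i3
    refine ⟨R1, Uc, hR1, hUc, f1, FLE_trans f2 hR2Uc, hUcR3, ?_⟩
    have r2 : Rdbl n c R1 Uc := rdbl_of hUc (FLE_trans f2 hR2Uc) (FLE_refl Uc) hcUc
    by_cases i1 : Rdbl n b P R1
    · have hL : cnt n b a c P R1 R2 R3 = 2 := by simp [cnt, i1, i2, i3]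
      rw [hL]; exact cnt_ge_12 i1 r2
    · have hL : cnt n b a c P R1 R2 R3 = 1 := by simp [cnt, i1, i2, i3]
      rw [hL]; exact cnt_ge_2 r2
  · refine ⟨R1, R2, hR1, hR2, f1, f2, f3, ?_⟩
    by_cases i1 : Rdbl n b P R1
    · have hL : cnt n b a c P R1 R2 R3 = 1 := by simp [cnt, i1, i2, i3]
      rw [hL]; exact cnt_ge_1 i1
    · have hL : cnt n b a c P R1 R2 R3 = 0 := by simp [cnt, i1, i2, i3]
      omega

lemma HI3 {n a b c : ℕ} (h2 : a ≤ b) (h3 : b < c) :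
    ∀ P R1 R2 R3 : Finset ℕ, R1 ⊆ Finset.Icc 1 n → R2 ⊆ Finset.Icc 1 n →
      R3 ⊆ Finset.Icc 1 n → FLE P R1 → FLE R1 R2 → FLE R2 R3 →
      ∃ S1 S2 : Finset ℕ, S1 ⊆ Finset.Icc 1 n ∧ S2 ⊆ Finset.Icc 1 n ∧ FLE P S1 ∧
        FLE S1 S2 ∧ FLE S2 R3 ∧ cnt n c a b P R1 R2 R3 ≤ cnt n a c b P S1 S2 R3 := by
  intro P R1 R2 R3 hR1 hR2 hR3 f1 f2 f3
  have hac : a < c := lt_of_le_of_lt h2 h3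
  by_cases i1 : Rdbl n c P R1 <;> by_cases i2 : Rdbl n a R1 R2
  · -- i1, i2 : W1
    obtain ⟨Uc, hUc, hPUc, hUcR1, hcUc⟩ := id i1
    obtain ⟨Ua, hUa, hR1Ua, hUaR2, haUa⟩ := id i2
    obtain ⟨V, hV, hUcV, hVUa, haV, hcV⟩ :=
      W1 hUc hUa (FLE_trans hUcR1 hR1Ua) hcUc haUa hac
    have hPV : FLE P V := FLE_trans hPUc hUcV
    have hVR3 : FLE V R3 := FLE_trans hVUa (FLE_trans hUaR2 f3)
    refine ⟨V, V, hV, hV, hPV, FLE_refl V, hVR3, ?_⟩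
    have r1 : Rdbl n a P V := rdbl_of hV hPV (FLE_refl V) haV
    have r2 : Rdbl n c V V := rdbl_of hV (FLE_refl V) (FLE_refl V) hcV
    by_cases i3 : Rdbl n b R2 R3
    · have r3 : Rdbl n b V R3 := rdbl_mono (FLE_trans hVUa hUaR2) (FLE_refl R3) i3
      have hL : cnt n c a b P R1 R2 R3 = 3 := by simp [cnt, i1, i2, i3]
      rw [hL]; exact cnt_ge_123 r1 r2 r3
    · have hL : cnt n c a b P R1 R2 R3 = 2 := by simp [cnt, i1, i2, i3]
      rw [hL]; exact cnt_ge_12 r1 r2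
  · -- i1, ¬i2
    obtain ⟨Uc, hUc, hPUc, hUcR1, hcUc⟩ := id i1
    have hUcR3 : FLE Uc R3 := FLE_trans hUcR1 (FLE_trans f2 f3)
    refine ⟨Uc, Uc, hUc, hUc, hPUc, FLE_refl Uc, hUcR3, ?_⟩
    have r2 : Rdbl n c Uc Uc := rdbl_of hUc (FLE_refl Uc) (FLE_refl Uc) hcUc
    by_cases i3 : Rdbl n b R2 R3
    · have r3 : Rdbl n b Uc R3 := rdbl_mono (FLE_trans hUcR1 f2) (FLE_refl R3) i3
      have hL : cnt n c a b P R1 R2 R3 = 2 := by simp [cnt, i1, i2, i3]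
      rw [hL]; exact cnt_ge_23 r2 r3
    · have hL : cnt n c a b P R1 R2 R3 = 1 := by simp [cnt, i1, i2, i3]
      rw [hL]; exact cnt_ge_2 r2
  · -- ¬i1, i2
    obtain ⟨Ua, hUa, hR1Ua, hUaR2, haUa⟩ := id i2
    have hPUa : FLE P Ua := FLE_trans f1 hR1Ua
    have hUaR3 : FLE Ua R3 := FLE_trans hUaR2 f3
    refine ⟨Ua, Ua, hUa, hUa, hPUa, FLE_refl Ua, hUaR3, ?_⟩
    have r1 : Rdbl n a P Ua := rdbl_of hUa hPUa (FLE_refl Ua) haUa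
    by_cases i3 : Rdbl n b R2 R3
    · have r3 : Rdbl n b Ua R3 := rdbl_mono hUaR2 (FLE_refl R3) i3
      have hL : cnt n c a b P R1 R2 R3 = 2 := by simp [cnt, i1, i2, i3]
      rw [hL]; exact cnt_ge_13 r1 r3
    · have hL : cnt n c a b P R1 R2 R3 = 1 := by simp [cnt, i1, i2, i3]
      rw [hL]; exact cnt_ge_1 r1
  · refine ⟨R1, R2, hR1, hR2, f1, f2, f3, ?_⟩
    by_cases i3 : Rdbl n b R2 R3
    · have hL : cnt n c a b P R1 R2 R3 = 1 := by simp [cnt, i1, i2, i3]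
      rw [hL]; exact cnt_ge_3 i3
    · have hL : cnt n c a b P R1 R2 R3 = 0 := by simp [cnt, i1, i2, i3]
      omega

lemma HI4 {n a b c : ℕ} (h2 : a ≤ b) (h3 : b < c) :
    ∀ P R1 R2 R3 : Finset ℕ, R1 ⊆ Finset.Icc 1 n → R2 ⊆ Finset.Icc 1 n →
      R3 ⊆ Finset.Icc 1 n → FLE P R1 → FLE R1 R2 → FLE R2 R3 →
      ∃ S1 S2 : Finset ℕ, S1 ⊆ Finset.Icc 1 n ∧ S2 ⊆ Finset.Icc 1 n ∧ FLE P S1 ∧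
        FLE S1 S2 ∧ FLE S2 R3 ∧ cnt n a c b P R1 R2 R3 ≤ cnt n c a b P S1 S2 R3 := by
  intro P R1 R2 R3 hR1 hR2 hR3 f1 f2 f3
  have hac : a < c := lt_of_le_of_lt h2 h3
  by_cases i1 : Rdbl n a P R1 <;> by_cases i2 : Rdbl n c R1 R2
  · -- i1, i2
    obtain ⟨Ua, hUa, hPUa, hUaR1, haUa⟩ := id i1
    obtain ⟨Uc, hUc, hR1Uc, hUcR2, hcUc⟩ := id i2
    have hUaUc : FLE Ua Uc := FLE_trans hUaR1 hR1Uc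
    by_cases i3 : Rdbl n b R2 R3
    · obtain ⟨Ub, hUb, hR2Ub, hUbR3, hbUb⟩ := id i3
      obtain ⟨V, hV, hUaV, hVUb, haV, hcV⟩ :=
        W5 hUa hUc hUb hUaUc (FLE_trans hUcR2 hR2Ub) haUa hcUc hbUb h2 h3
      have hPV : FLE P V := FLE_trans hPUa hUaV
      have hVR3 : FLE V R3 := FLE_trans hVUb hUbR3
      refine ⟨V, V, hV, hV, hPV, FLE_refl V, hVR3, ?_⟩
      have r1 : Rdbl n c P V := rdbl_of hV hPV (FLE_refl V) hcV
      have r2 : Rdbl n a V V := rdbl_of hV (FLE_refl V) (FLE_refl V) haV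
      have r3 : Rdbl n b V R3 := rdbl_of hUb hVUb hUbR3 hbUb
      have hL : cnt n a c b P R1 R2 R3 = 3 := by simp [cnt, i1, i2, i3]
      rw [hL]; exact cnt_ge_123 r1 r2 r3
    · rcases W4 hUa hUc hUaUc haUa hcUc h2 (le_of_lt h3) hac with
        ⟨V, hV, hUaV, hVUc, hbV⟩ | ⟨V, W, hV, hW, hUaV, hVW, hWUc, hcV, haW⟩
      · have hPUa' : FLE P Ua := hPUa
        have hVR3 : FLE V R3 := FLE_trans hVUc (FLE_trans hUcR2 f3)
        refine ⟨Ua, V, hUa, hV, hPUa, hUaV, hVR3, ?_⟩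
        have r2 : Rdbl n a Ua V := rdbl_of hUa (FLE_refl Ua) hUaV haUa
        have r3 : Rdbl n b V R3 := rdbl_of hV (FLE_refl V) hVR3 hbV
        have hL : cnt n a c b P R1 R2 R3 = 2 := by simp [cnt, i1, i2, i3]
        rw [hL]; exact cnt_ge_23 r2 r3
      · have hPV : FLE P V := FLE_trans hPUa hUaV
        have hWR3 : FLE W R3 := FLE_trans hWUc (FLE_trans hUcR2 f3)
        refine ⟨V, W, hV, hW, hPV, hVW, hWR3, ?_⟩
        have r1 : Rdbl n c P V := rdbl_of hV hPV (FLE_refl V) hcV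
        have r2 : Rdbl n a V W := rdbl_of hW hVW (FLE_refl W) haW
        have hL : cnt n a c b P R1 R2 R3 = 2 := by simp [cnt, i1, i2, i3]
        rw [hL]; exact cnt_ge_12 r1 r2
  · -- i1, ¬i2
    obtain ⟨Ua, hUa, hPUa, hUaR1, haUa⟩ := id i1
    have hUaR3 : FLE Ua R3 := FLE_trans hUaR1 (FLE_trans f2 f3)
    refine ⟨Ua, Ua, hUa, hUa, hPUa, FLE_refl Ua, hUaR3, ?_⟩
    have r2 : Rdbl n a Ua Ua := rdbl_of hUa (FLE_refl Ua) (FLE_refl Ua) haUa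
    by_cases i3 : Rdbl n b R2 R3
    · have r3 : Rdbl n b Ua R3 := rdbl_mono (FLE_trans hUaR1 f2) (FLE_refl R3) i3
      have hL : cnt n a c b P R1 R2 R3 = 2 := by simp [cnt, i1, i2, i3]
      rw [hL]; exact cnt_ge_23 r2 r3
    · have hL : cnt n a c b P R1 R2 R3 = 1 := by simp [cnt, i1, i2, i3]
      rw [hL]; exact cnt_ge_2 r2
  · -- ¬i1, i2
    obtain ⟨Uc, hUc, hR1Uc, hUcR2, hcUc⟩ := id i2
    have hPUc : FLE P Uc := FLE_trans f1 hR1Uc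
    have hUcR3 : FLE Uc R3 := FLE_trans hUcR2 f3
    refine ⟨Uc, Uc, hUc, hUc, hPUc, FLE_refl Uc, hUcR3, ?_⟩
    have r1 : Rdbl n c P Uc := rdbl_of hUc hPUc (FLE_refl Uc) hcUc
    by_cases i3 : Rdbl n b R2 R3
    · have r3 : Rdbl n b Uc R3 := rdbl_mono hUcR2 (FLE_refl R3) i3
      have hL : cnt n a c b P R1 R2 R3 = 2 := by simp [cnt, i1, i2, i3]
      rw [hL]; exact cnt_ge_13 r1 r3
    · have hL : cnt n a c b P R1 R2 R3 = 1 := by simp [cnt, i1, i2, i3]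
      rw [hL]; exact cnt_ge_1 r1
  · refine ⟨R1, R2, hR1, hR2, f1, f2, f3, ?_⟩
    by_cases i3 : Rdbl n b R2 R3
    · have hL : cnt n a c b P R1 R2 R3 = 1 := by simp [cnt, i1, i2, i3]
      rw [hL]; exact cnt_ge_3 i3
    · have hL : cnt n a c b P R1 R2 R3 = 0 := by simp [cnt, i1, i2, i3]
      omega

lemma key_eq3 {n x y z x' y' z' : ℕ}
    (H1 : ∀ P R1 R2 R3 : Finset ℕ, R1 ⊆ Finset.Icc 1 n → R2 ⊆ Finset.Icc 1 n →
      R3 ⊆ Finset.Icc 1 n → FLE P R1 → FLE R1 R2 → FLE R2 R3 →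
      ∃ S1 S2 : Finset ℕ, S1 ⊆ Finset.Icc 1 n ∧ S2 ⊆ Finset.Icc 1 n ∧ FLE P S1 ∧
        FLE S1 S2 ∧ FLE S2 R3 ∧ cnt n x y z P R1 R2 R3 ≤ cnt n x' y' z' P S1 S2 R3)
    (H2 : ∀ P R1 R2 R3 : Finset ℕ, R1 ⊆ Finset.Icc 1 n → R2 ⊆ Finset.Icc 1 n →
      R3 ⊆ Finset.Icc 1 n → FLE P R1 → FLE R1 R2 → FLE R2 R3 →
      ∃ S1 S2 : Finset ℕ, S1 ⊆ Finset.Icc 1 n ∧ S2 ⊆ Finset.Icc 1 n ∧ FLE P S1 ∧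
        FLE S1 S2 ∧ FLE S2 R3 ∧ cnt n x' y' z' P R1 R2 R3 ≤ cnt n x y z P S1 S2 R3)
    (s : List ℕ) : rhoW n (x :: y :: z :: s) = rhoW n (x' :: y' :: z' :: s) := by
  funext P Q
  exact le_antisymm (key_le n x y z x' y' z' H1 (rhoW n s) P Q)
    (key_le n x' y' z' x y z H2 (rhoW n s) P Q)

lemma prefix_congr {n : ℕ} (p : List ℕ) {w w' : List ℕ} (h : rhoW n w = rhoW n w') :
    rhoW n (p ++ w) = rhoW n (p ++ w') := by
  induction p with
  | nil => simpa using h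
  | cons a p ih =>
    show tmul n (rhoGen n a) (rhoW n (p ++ w)) = tmul n (rhoGen n a) (rhoW n (p ++ w'))
    rw [ih]

end S8

/-- `ρₙ` respects the Knuth relations (`ρₙ(bca) = ρₙ(bac)` for
`a < b ≤ c`, and `ρₙ(cab) = ρₙ(acb)` for `a ≤ b < c`), and hence induces a well-defined
homomorphism on the plactic monoid of rank `n`: plactically equivalent words have equal
images. -/
theorem stmt8 (n : ℕ) :
    (∀ a b c : ℕ, 1 ≤ a → a < b → b ≤ c → c ≤ n →
      rhoW n [b, c, a] = rhoW n [b, a, c]) ∧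
    (∀ a b c : ℕ, 1 ≤ a → a ≤ b → b < c → c ≤ n →
      rhoW n [c, a, b] = rhoW n [a, c, b]) ∧
    (∀ w v : List ℕ, PlacticRel n w v → rhoW n w = rhoW n v) := by
  refine ⟨?_, ?_, ?_⟩
  · intro a b c _ h2 h3 _
    exact S8.key_eq3 (S8.HI1 h2 h3) (S8.HI2 h2 h3) []
  · intro a b c _ h2 h3 _
    exact S8.key_eq3 (S8.HI3 h2 h3) (S8.HI4 h2 h3) []
  · intro w v h
    induction h with
    | rel w v hwv =>
      obtain ⟨p, s, u, u', hK, rfl, rfl⟩ := hwv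
      rw [List.append_assoc, List.append_assoc]
      apply S8.prefix_congr
      cases hK with
      | k1 a b c h1 h2 h3 h4 =>
        exact S8.key_eq3 (S8.HI1 h2 h3) (S8.HI2 h2 h3) s
      | k2 a b c h1 h2 h3 h4 =>
        exact S8.key_eq3 (S8.HI3 h2 h3) (S8.HI4 h2 h3) s
    | refl w => rfl
    | symm _ _ _ ih => exact ih.symm
    | trans _ _ _ _ _ ih1 ih2 => exact ih1.trans ih2
end

section
/- For each Knuth relation u = v, and all subsets P, Q of {1,...,n} with |P| = |Q|, the word u can be read from P to Q if and only if v can be read from P to Q. Concretely: for a < b ≤ c, bca is readable from P to Q iff bac is; and for a ≤ b < c, cab is readable from P to Q iff acb is. -/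
namespace Stmt9Aux
open List

def nthL (l : List ℕ) (i : ℕ) : ℕ := l.getD i 0

lemma nthL_eq {l : List ℕ} {i : ℕ} (h : i < l.length) : nthL l i = l[i] :=
  List.getD_eq_getElem l 0 h

lemma nthL_mem {l : List ℕ} {i : ℕ} (h : i < l.length) : nthL l i ∈ l := by
  rw [nthL_eq h]; exact List.getElem_mem h

lemma exists_idx {l : List ℕ} {x : ℕ} (h : x ∈ l) : ∃ i, i < l.length ∧ nthL l i = x := by
  obtain ⟨i, hi, hx⟩ := List.mem_iff_getElem.1 h
  exact ⟨i, hi, by rw [nthL_eq hi, hx]⟩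

lemma sortedL_iff {l : List ℕ} :
    l.Pairwise (· < ·) ↔ ∀ i j, i < j → j < l.length → nthL l i < nthL l j := by
  rw [List.pairwise_iff_getElem]
  constructor
  · intro h i j hij hj
    rw [nthL_eq (hij.trans hj), nthL_eq hj]
    exact h i j (hij.trans hj) hj hij
  · intro h i j hi hj hij
    have := h i j hij hj
    rwa [nthL_eq (hij.trans hj), nthL_eq hj] at this

lemma nthL_lt {l : List ℕ} (hs : l.Pairwise (· < ·)) {i j : ℕ} (hij : i < j)
    (hj : j < l.length) : nthL l i < nthL l j := sortedL_iff.1 hs i j hij hj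

lemma nthL_le {l : List ℕ} (hs : l.Pairwise (· < ·)) {i j : ℕ} (hij : i ≤ j)
    (hj : j < l.length) : nthL l i ≤ nthL l j := by
  rcases hij.lt_or_eq with h | h
  · exact (nthL_lt hs h hj).le
  · rw [h]

lemma nthL_set {l : List ℕ} {m x i : ℕ} (hi : i < l.length) :
    nthL (l.set m x) i = if i = m then x else nthL l i := by
  have hi' : i < (l.set m x).length := by rwa [List.length_set]
  rw [nthL_eq hi', List.getElem_set]
  by_cases h : i = m
  · simp [h]
  · simp [h, Ne.symm h, nthL_eq hi]

lemma set_sorted {l : List ℕ} (hs : l.Pairwise (· < ·)) {m x : ℕ} (hm : m < l.length)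
    (hlow : ∀ j < m, nthL l j < x)
    (hhigh : ∀ j, m < j → j < l.length → x < nthL l j) :
    (l.set m x).Pairwise (· < ·) := by
  rw [sortedL_iff]
  intro i j hij hj
  rw [List.length_set] at hj
  have hi := hij.trans hj
  rw [nthL_set hi, nthL_set hj]
  by_cases h1 : i = m <;> by_cases h2 : j = m
  · omega
  · simp only [h1, if_pos rfl, if_neg h2]
    exact hhigh j (h1 ▸ hij) hj
  · simp only [if_neg h1, h2, if_pos rfl]
    exact hlow i (h2 ▸ hij)
  · simp only [if_neg h1, if_neg h2]
    exact nthL_lt hs hij hj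

lemma nthL_zip {f : ℕ → ℕ → ℕ} {s t : List ℕ} {i : ℕ} (hi : i < s.length)
    (hi' : i < t.length) :
    nthL (List.zipWith f s t) i = f (nthL s i) (nthL t i) := by
  have h : i < (List.zipWith f s t).length := by rw [List.length_zipWith]; omega
  rw [nthL_eq h, List.getElem_zipWith, nthL_eq hi, nthL_eq hi']

lemma zip_sorted {f : ℕ → ℕ → ℕ} (hf : ∀ a b a' b' : ℕ, a < a' → b < b' → f a b < f a' b')
    {s t : List ℕ} (hs : s.Pairwise (· < ·)) (ht : t.Pairwise (· < ·)) :
    (List.zipWith f s t).Pairwise (· < ·) := by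
  rw [sortedL_iff]
  intro i j hij hj
  rw [List.length_zipWith] at hj
  have hjs : j < s.length := lt_of_lt_of_le hj inf_le_left
  have hjt : j < t.length := lt_of_lt_of_le hj inf_le_right
  rw [nthL_zip (hij.trans hjs) (hij.trans hjt), nthL_zip hjs hjt]
  exact hf _ _ _ _ (nthL_lt hs hij hjs) (nthL_lt ht hij hjt)

lemma mem_zip {f : ℕ → ℕ → ℕ} (hf : ∀ a b : ℕ, f a b = a ∨ f a b = b)
    {s t : List ℕ} {v : ℕ} (hv : v ∈ List.zipWith f s t) : v ∈ s ∨ v ∈ t := by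
  obtain ⟨i, hi, hx⟩ := List.mem_iff_getElem.1 hv
  rw [List.getElem_zipWith] at hx
  have hi' := hi
  rw [List.length_zipWith] at hi'
  have hs : i < s.length := lt_of_lt_of_le hi' inf_le_left
  have ht : i < t.length := lt_of_lt_of_le hi' inf_le_right
  rcases hf s[i] t[i] with h | h
  · left; rw [← hx, h]; exact List.getElem_mem hs
  · right; rw [← hx, h]; exact List.getElem_mem ht

lemma length_zip_eq {f : ℕ → ℕ → ℕ} {s t : List ℕ} (h : s.length = t.length) :
    (List.zipWith f s t).length = s.length := by
  rw [List.length_zipWith, h, inf_idem]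

-- bridge lemmas
lemma nthEl_toFinset {l : List ℕ} (h : l.Pairwise (· < ·)) (i : ℕ) :
    nthEl l.toFinset i = nthL l i := by
  unfold nthEl nthL
  rw [(List.toFinset_sort (· ≤ ·) h.nodup).2 (h.imp fun h => le_of_lt h)]

lemma card_toFinset' {l : List ℕ} (h : l.Pairwise (· < ·)) : l.toFinset.card = l.length :=
  List.toFinset_card_of_nodup h.nodup

lemma nthEl_sort (S : Finset ℕ) (i : ℕ) : nthEl S i = nthL (S.sort (· ≤ ·)) i := rfl
lemma FLE_of_lists {s t : List ℕ} (hs : s.Pairwise (· < ·)) (ht : t.Pairwise (· < ·))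
    (hlen : s.length = t.length) (hle : ∀ i < t.length, nthL s i ≤ nthL t i) :
    FLE s.toFinset t.toFinset := by
  constructor
  · rw [card_toFinset' hs, card_toFinset' ht, hlen]
  · intro i hi
    rw [card_toFinset' ht] at hi
    rw [nthEl_toFinset hs, nthEl_toFinset ht]
    exact hle i hi

end Stmt9Aux


namespace Stmt9Aux
open List

/-- List-level version of 3-letter readability. -/
def LRead (n x y z : ℕ) (p q : List ℕ) : Prop :=
  ∃ s1 s2 s3 : List ℕ,
    s1.Pairwise (· < ·) ∧ s2.Pairwise (· < ·) ∧ s3.Pairwise (· < ·) ∧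
    (∀ v ∈ s1, v ∈ Finset.Icc 1 n) ∧ (∀ v ∈ s2, v ∈ Finset.Icc 1 n) ∧
    (∀ v ∈ s3, v ∈ Finset.Icc 1 n) ∧
    s1.length = p.length ∧ s2.length = p.length ∧ s3.length = p.length ∧
    q.length = p.length ∧
    (∀ i < p.length, nthL p i ≤ nthL s1 i) ∧
    (∀ i < p.length, nthL s1 i ≤ nthL s2 i) ∧
    (∀ i < p.length, nthL s2 i ≤ nthL s3 i) ∧
    (∀ i < p.length, nthL s3 i ≤ nthL q i) ∧
    x ∈ s1 ∧ y ∈ s2 ∧ z ∈ s3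

lemma readable3_iff (n x y z : ℕ) (P Q : Finset ℕ) :
    Readable n [x, y, z] P Q ↔ LRead n x y z (P.sort (· ≤ ·)) (Q.sort (· ≤ ·)) := by
  constructor
  · rintro ⟨L, hlen, hsub, hchain, hmem⟩
    obtain ⟨S1, S2, S3, rfl⟩ := List.length_eq_three.1 hlen
    simp only [List.Chain', List.cons_append, List.nil_append, List.isChain_cons_cons, List.isChain_singleton,
      and_true] at hchain
    obtain ⟨h1, h2, h3, h4⟩ := hchain
    have m1 : x ∈ S1 := by simpa using hmem 0 (by norm_num)
    have m2 : y ∈ S2 := by simpa using hmem 1 (by norm_num)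
    have m3 : z ∈ S3 := by simpa using hmem 2 (by norm_num)
    refine ⟨S1.sort (· ≤ ·), S2.sort (· ≤ ·), S3.sort (· ≤ ·),
      (Finset.sortedLT_sort _).pairwise, (Finset.sortedLT_sort _).pairwise, (Finset.sortedLT_sort _).pairwise,
      ?_, ?_, ?_, ?_, ?_, ?_, ?_, ?_, ?_, ?_, ?_, ?_, ?_, ?_⟩
    · intro v hv; exact hsub S1 (by simp) (Finset.mem_sort (· ≤ ·) |>.1 hv)
    · intro v hv; exact hsub S2 (by simp) (Finset.mem_sort (· ≤ ·) |>.1 hv)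
    · intro v hv; exact hsub S3 (by simp) (Finset.mem_sort (· ≤ ·) |>.1 hv)
    · rw [Finset.length_sort, Finset.length_sort, h1.1]
    · rw [Finset.length_sort, Finset.length_sort, ← h2.1, h1.1]
    · rw [Finset.length_sort, Finset.length_sort, ← h3.1, ← h2.1, h1.1]
    · rw [Finset.length_sort, Finset.length_sort, ← h4.1, ← h3.1, ← h2.1, h1.1]
    · intro i hi
      exact h1.2 i (by rw [Finset.length_sort, h1.1] at hi; exact hi)
    · intro i hi
      exact h2.2 i (by rw [Finset.length_sort, h1.1, h2.1] at hi; exact hi)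
    · intro i hi
      exact h3.2 i (by rw [Finset.length_sort, h1.1, h2.1, h3.1] at hi; exact hi)
    · intro i hi
      exact h4.2 i (by rw [Finset.length_sort, h1.1, h2.1, h3.1, h4.1] at hi; exact hi)
    · exact (Finset.mem_sort (· ≤ ·)).2 m1
    · exact (Finset.mem_sort (· ≤ ·)).2 m2
    · exact (Finset.mem_sort (· ≤ ·)).2 m3
  · rintro ⟨s1, s2, s3, hs1, hs2, hs3, hI1, hI2, hI3, hl1, hl2, hl3, hlq, g1, g2, g3, g4,
      m1, m2, m3⟩
    have hsP : (P.sort (· ≤ ·)).Pairwise (· < ·) := (Finset.sortedLT_sort _).pairwise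
    have hsQ : (Q.sort (· ≤ ·)).Pairwise (· < ·) := (Finset.sortedLT_sort _).pairwise
    have hPe : ((P.sort (· ≤ ·)).toFinset : Finset ℕ) = P := Finset.sort_toFinset _ _
    have hQe : ((Q.sort (· ≤ ·)).toFinset : Finset ℕ) = Q := Finset.sort_toFinset _ _
    have F1 : FLE P s1.toFinset := by
      rw [← hPe]
      exact FLE_of_lists hsP hs1 (by rw [hl1]) (fun i hi => g1 i (by omega))
    have F2 : FLE s1.toFinset s2.toFinset :=
      FLE_of_lists hs1 hs2 (by rw [hl1, hl2]) (fun i hi => g2 i (by omega))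
    have F3 : FLE s2.toFinset s3.toFinset :=
      FLE_of_lists hs2 hs3 (by rw [hl2, hl3]) (fun i hi => g3 i (by omega))
    have F4 : FLE s3.toFinset Q := by
      rw [← hQe]
      exact FLE_of_lists hs3 hsQ (by rw [hl3, hlq]) (fun i hi => g4 i (by omega))
    refine ⟨[s1.toFinset, s2.toFinset, s3.toFinset], rfl, ?_, ?_, ?_⟩
    · intro A hA
      simp only [List.mem_cons, List.not_mem_nil, or_false] at hA
      rcases hA with rfl | rfl | rfl
      · intro v hv; exact hI1 v (List.mem_toFinset.1 hv)
      · intro v hv; exact hI2 v (List.mem_toFinset.1 hv)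
      · intro v hv; exact hI3 v (List.mem_toFinset.1 hv)
    · exact List.isChain_cons_cons.2 ⟨F1, List.isChain_cons_cons.2 ⟨F2, List.isChain_cons_cons.2 ⟨F3,
        List.isChain_cons_cons.2 ⟨F4, List.isChain_singleton Q⟩⟩⟩⟩
    · intro i h
      simp only [List.length_cons, List.length_nil] at h
      interval_cases i
      · simpa using List.mem_toFinset.2 m1
      · simpa using List.mem_toFinset.2 m2
      · simpa using List.mem_toFinset.2 m3

end Stmt9Aux

namespace Stmt9Aux
open List

lemma max_strict : ∀ a b a' b' : ℕ, a < a' → b < b' → max a b < max a' b' :=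
  fun _ _ _ _ h h' => max_lt_max h h'
lemma min_strict : ∀ a b a' b' : ℕ, a < a' → b < b' → min a b < min a' b' :=
  fun _ _ _ _ h h' => min_lt_min h h'
lemma max_ch : ∀ a b : ℕ, max a b = a ∨ max a b = b := fun a b => max_choice a b
lemma min_ch : ∀ a b : ℕ, min a b = a ∨ min a b = b := fun a b => min_choice a b

/-- Construction (I): for `a < b ≤ c`, `bac` readable implies `bca` readable. -/
lemma stepI {n a b c : ℕ} {p q : List ℕ}
    (h1 : 1 ≤ a) (h2 : a < b) (h3 : b ≤ c) (h4 : c ≤ n)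
    (h : LRead n b a c p q) : LRead n b c a p q := by
  obtain ⟨s1, s2, s3, hs1, hs2, hs3, hI1, hI2, hI3, hl1, hl2, hl3, hlq,
    g1, g2, g3, g4, mb, ma, mc⟩ := h
  set k := p.length with hk
  obtain ⟨i, hi, hib⟩ := exists_idx mb
  obtain ⟨j, hj, hja⟩ := exists_idx ma
  obtain ⟨m, hm, hmc⟩ := exists_idx mc
  rw [hl1] at hi; rw [hl2] at hj; rw [hl3] at hm
  -- m' : greatest index with s1 entry ≤ c
  set m' := Nat.findGreatest (fun l => nthL s1 l ≤ c) (k - 1) with hm'def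
  have hwit : nthL s1 i ≤ c := by rw [hib]; exact h3
  have hile : i ≤ k - 1 := by omega
  have hm'le : nthL s1 m' ≤ c := Nat.findGreatest_spec (P := fun l => nthL s1 l ≤ c) hile hwit
  have him' : i ≤ m' := Nat.le_findGreatest (P := fun l => nthL s1 l ≤ c) hile hwit
  have hm'k : m' < k := by
    have := Nat.findGreatest_le (P := fun l => nthL s1 l ≤ c) (k - 1); omega
  have hmax : ∀ l, m' < l → l < k → c < nthL s1 l := by
    intro l hl hlk
    have := Nat.findGreatest_is_greatest (P := fun l => nthL s1 l ≤ c) hl (by omega)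
    omega
  -- j < i
  have hji : j < i := by
    by_contra hcon
    push_neg at hcon
    have := le_trans (g2 i hi) (nthL_le hs2 hcon (by omega))
    omega
  -- m ≤ m'
  have h13 : ∀ l < k, nthL s1 l ≤ nthL s3 l := fun l hl => le_trans (g2 l hl) (g3 l hl)
  have hmm' : m ≤ m' := by
    by_contra hcon
    push_neg at hcon
    have := hmax m hcon hm
    have := h13 m hm
    omega
  -- the new chain
  set t2 := s1.set m' c with ht2def
  set t3 := List.zipWith max s2 t2 with ht3def
  have ht2len : t2.length = k := by rw [ht2def, List.length_set, hl1]
  have ht3len : t3.length = k := by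
    rw [ht3def, List.length_zipWith, hl2, ht2len]; omega
  have ht2g : ∀ l < k, nthL t2 l = if l = m' then c else nthL s1 l := by
    intro l hl
    rw [ht2def, nthL_set (by omega : l < s1.length)]
  have ht3g : ∀ l < k, nthL t3 l = max (nthL s2 l) (nthL t2 l) := by
    intro l hl
    rw [ht3def, nthL_zip (by omega) (by omega)]
  have ht2sorted : t2.Pairwise (· < ·) := by
    refine set_sorted hs1 (by omega) (fun l hl => ?_) (fun l hl hl' => hmax l hl (by omega))
    exact lt_of_lt_of_le (nthL_lt hs1 hl (by omega)) hm'le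
  have ht3sorted : t3.Pairwise (· < ·) := zip_sorted max_strict hs2 ht2sorted
  refine ⟨s1, t2, t3, hs1, ht2sorted, ht3sorted, hI1, ?_, ?_, hl1, ht2len, ht3len, hlq,
    g1, ?_, ?_, ?_, mb, ?_, ?_⟩
  · -- t2 ⊆ Icc
    intro v hv
    rcases List.mem_or_eq_of_mem_set hv with h | rfl
    · exact hI1 v h
    · simp only [Finset.mem_Icc]; omega
  · -- t3 ⊆ Icc
    intro v hv
    rcases mem_zip max_ch hv with h | h
    · exact hI2 v h
    · rcases List.mem_or_eq_of_mem_set h with h' | rfl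
      · exact hI1 v h'
      · simp only [Finset.mem_Icc]; omega
  · -- s1 ≤ t2
    intro l hl
    rw [ht2g l hl]
    by_cases hc : l = m'
    · rw [if_pos hc, hc]; exact hm'le
    · rw [if_neg hc]
  · -- t2 ≤ t3
    intro l hl
    rw [ht3g l hl]
    exact le_max_right _ _
  · -- t3 ≤ q
    intro l hl
    rw [ht3g l hl]
    refine max_le (le_trans (g3 l hl) (g4 l hl)) ?_
    rw [ht2g l hl]
    by_cases hc : l = m'
    · rw [if_pos hc, hc]
      calc c = nthL s3 m := hmc.symm
        _ ≤ nthL s3 m' := nthL_le hs3 hmm' (by omega)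
        _ ≤ nthL q m' := g4 m' hm'k
    · rw [if_neg hc]
      exact le_trans (h13 l hl) (g4 l hl)
  · -- c ∈ t2
    have : nthL t2 m' = c := by rw [ht2g m' hm'k, if_pos rfl]
    rw [← this]
    exact nthL_mem (by omega)
  · -- a ∈ t3
    have hjm' : j ≠ m' := by omega
    have : nthL t3 j = a := by
      rw [ht3g j hj, ht2g j hj, if_neg hjm', hja]
      have : nthL s1 j ≤ a := by rw [← hja]; exact g2 j hj
      omega
    rw [← this]
    exact nthL_mem (by omega)

end Stmt9Aux

namespace Stmt9Aux
open List

/-- Construction (II): for `a < b ≤ c`, `bca` readable implies `bac` readable. -/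
lemma stepII {n a b c : ℕ} {p q : List ℕ} (hq : q.Pairwise (· < ·))
    (hqI : ∀ v ∈ q, v ∈ Finset.Icc 1 n)
    (h1 : 1 ≤ a) (h2 : a < b) (h3 : b ≤ c) (h4 : c ≤ n)
    (h : LRead n b c a p q) : LRead n b a c p q := by
  obtain ⟨s1, s2, s3, hs1, hs2, hs3, hI1, hI2, hI3, hl1, hl2, hl3, hlq,
    g1, g2, g3, g4, mb, mc, ma⟩ := h
  set k := p.length with hk
  obtain ⟨i, hi, hib⟩ := exists_idx mb
  obtain ⟨m, hm, hmc⟩ := exists_idx mc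
  obtain ⟨j, hj, hja⟩ := exists_idx ma
  rw [hl1] at hi; rw [hl2] at hm; rw [hl3] at hj
  have hex : ∃ l, c ≤ nthL q l :=
    ⟨m, by rw [← hmc]; exact le_trans (g3 m hm) (g4 m hm)⟩
  set m0 := Nat.find hex with hm0def
  have hspec : c ≤ nthL q m0 := Nat.find_spec hex
  have hm0m : m0 ≤ m := Nat.find_min' hex (by rw [← hmc]; exact le_trans (g3 m hm) (g4 m hm))
  have hm0k : m0 < k := by omega
  have hmin : ∀ l < m0, nthL q l < c := by
    intro l hl
    have := Nat.find_min hex hl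
    omega
  set t3 := q.set m0 c with ht3def
  set t2 := List.zipWith min s3 t3 with ht2def
  set t1 := List.zipWith min s1 t2 with ht1def
  have ht3len : t3.length = k := by rw [ht3def, List.length_set, hlq]
  have ht2len : t2.length = k := by rw [ht2def, List.length_zipWith, hl3, ht3len]; omega
  have ht1len : t1.length = k := by rw [ht1def, List.length_zipWith, hl1, ht2len]; omega
  have ht3g : ∀ l < k, nthL t3 l = if l = m0 then c else nthL q l := by
    intro l hl; rw [ht3def, nthL_set (by omega : l < q.length)]
  have ht2g : ∀ l < k, nthL t2 l = min (nthL s3 l) (nthL t3 l) := by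
    intro l hl; rw [ht2def, nthL_zip (by omega) (by omega)]
  have ht1g : ∀ l < k, nthL t1 l = min (nthL s1 l) (nthL t2 l) := by
    intro l hl; rw [ht1def, nthL_zip (by omega) (by omega)]
  have ht3sorted : t3.Pairwise (· < ·) := by
    refine set_sorted hq (by omega) hmin (fun l hl hl' => ?_)
    exact lt_of_le_of_lt hspec (nthL_lt hq hl (by omega))
  have ht2sorted : t2.Pairwise (· < ·) := zip_sorted min_strict hs3 ht3sorted
  have ht1sorted : t1.Pairwise (· < ·) := zip_sorted min_strict hs1 ht2sorted
  -- t3 pointwise facts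
  have ht3ge : ∀ l < k, nthL s3 l ≤ nthL q l → True := fun _ _ _ => trivial
  have hpq : ∀ l < k, nthL p l ≤ nthL q l := fun l hl =>
    le_trans (g1 l hl) (le_trans (g2 l hl) (le_trans (g3 l hl) (g4 l hl)))
  refine ⟨t1, t2, t3, ht1sorted, ht2sorted, ht3sorted, ?_, ?_, ?_,
    ht1len, ht2len, ht3len, hlq, ?_, ?_, ?_, ?_, ?_, ?_, ?_⟩
  · -- t1 ⊆ Icc
    intro v hv
    rcases mem_zip min_ch hv with h | h
    · exact hI1 v h
    · rcases mem_zip min_ch h with h' | h'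
      · exact hI3 v h'
      · rcases List.mem_or_eq_of_mem_set h' with h'' | rfl
        · exact hqI v h''
        · simp only [Finset.mem_Icc]; omega
  · -- t2 ⊆ Icc
    intro v hv
    rcases mem_zip min_ch hv with h | h
    · exact hI3 v h
    · rcases List.mem_or_eq_of_mem_set h with h'' | rfl
      · exact hqI v h''
      · simp only [Finset.mem_Icc]; omega
  · -- t3 ⊆ Icc
    intro v hv
    rcases List.mem_or_eq_of_mem_set hv with h'' | rfl
    · exact hqI v h''
    · simp only [Finset.mem_Icc]; omega
  · -- p ≤ t1
    intro l hl
    rw [ht1g l hl, ht2g l hl, ht3g l hl]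
    refine le_min (g1 l hl) (le_min (le_trans (g1 l hl) (le_trans (g2 l hl) (g3 l hl))) ?_)
    by_cases hc : l = m0
    · rw [if_pos hc, hc]
      calc nthL p m0 ≤ nthL s2 m0 := le_trans (g1 m0 hm0k) (g2 m0 hm0k)
        _ ≤ nthL s2 m := nthL_le hs2 hm0m (by omega)
        _ = c := hmc
    · rw [if_neg hc]; exact hpq l hl
  · -- t1 ≤ t2
    intro l hl
    rw [ht1g l hl]
    exact min_le_right _ _
  · -- t2 ≤ t3
    intro l hl
    rw [ht2g l hl]
    exact min_le_right _ _
  · -- t3 ≤ q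
    intro l hl
    rw [ht3g l hl]
    by_cases hc : l = m0
    · rw [if_pos hc, hc]; exact hspec
    · rw [if_neg hc]
  · -- b ∈ t1
    have : nthL t1 i = b := by
      rw [ht1g i hi, ht2g i hi, ht3g i hi, hib]
      have hs3i : b ≤ nthL s3 i := by rw [← hib]; exact le_trans (g2 i hi) (g3 i hi)
      by_cases hc : i = m0
      · rw [if_pos hc]; omega
      · rw [if_neg hc]
        have : nthL s3 i ≤ nthL q i := g4 i hi
        omega
    rw [← this]; exact nthL_mem (by omega)
  · -- a ∈ t2
    have : nthL t2 j = a := by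
      rw [ht2g j hj, ht3g j hj, hja]
      by_cases hc : j = m0
      · rw [if_pos hc]; omega
      · rw [if_neg hc]
        have : nthL s3 j ≤ nthL q j := g4 j hj
        rw [hja] at this
        omega
    rw [← this]; exact nthL_mem (by omega)
  · -- c ∈ t3
    have : nthL t3 m0 = c := by rw [ht3g m0 hm0k, if_pos rfl]
    rw [← this]; exact nthL_mem (by omega)

/-- Construction (III): for `a ≤ b < c`, `cab` readable implies `acb` readable. -/
lemma stepIII {n a b c : ℕ} {p q : List ℕ} (hp : p.Pairwise (· < ·))
    (hpI : ∀ v ∈ p, v ∈ Finset.Icc 1 n)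
    (h1 : 1 ≤ a) (h2 : a ≤ b) (h3 : b < c) (h4 : c ≤ n)
    (h : LRead n c a b p q) : LRead n a c b p q := by
  obtain ⟨s1, s2, s3, hs1, hs2, hs3, hI1, hI2, hI3, hl1, hl2, hl3, hlq,
    g1, g2, g3, g4, mc, ma, mb⟩ := h
  set k := p.length with hk
  obtain ⟨m, hm, hmc⟩ := exists_idx mc
  obtain ⟨j, hj, hja⟩ := exists_idx ma
  obtain ⟨i, hi, hib⟩ := exists_idx mb
  rw [hl1] at hm; rw [hl2] at hj; rw [hl3] at hi
  have hwit : nthL p j ≤ a := by rw [← hja]; exact le_trans (g1 j hj) (g2 j hj)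
  have hjle : j ≤ k - 1 := by omega
  set pi := Nat.findGreatest (fun l => nthL p l ≤ a) (k - 1) with hpidef
  have hpile : nthL p pi ≤ a := Nat.findGreatest_spec (P := fun l => nthL p l ≤ a) hjle hwit
  have hjpi : j ≤ pi := Nat.le_findGreatest (P := fun l => nthL p l ≤ a) hjle hwit
  have hpik : pi < k := by
    have := Nat.findGreatest_le (P := fun l => nthL p l ≤ a) (k - 1); omega
  have hmax : ∀ l, pi < l → l < k → a < nthL p l := by
    intro l hl hlk
    have := Nat.findGreatest_is_greatest (P := fun l => nthL p l ≤ a) hl (by omega)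
    omega
  set t1 := p.set pi a with ht1def
  set t2 := List.zipWith max s1 t1 with ht2def
  set t3 := List.zipWith max s3 t2 with ht3def
  have ht1len : t1.length = k := by rw [ht1def, List.length_set]
  have ht2len : t2.length = k := by rw [ht2def, List.length_zipWith, hl1, ht1len]; omega
  have ht3len : t3.length = k := by rw [ht3def, List.length_zipWith, hl3, ht2len]; omega
  have ht1g : ∀ l < k, nthL t1 l = if l = pi then a else nthL p l := by
    intro l hl; rw [ht1def, nthL_set (by omega : l < p.length)]
  have ht2g : ∀ l < k, nthL t2 l = max (nthL s1 l) (nthL t1 l) := by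
    intro l hl; rw [ht2def, nthL_zip (by omega) (by omega)]
  have ht3g : ∀ l < k, nthL t3 l = max (nthL s3 l) (nthL t2 l) := by
    intro l hl; rw [ht3def, nthL_zip (by omega) (by omega)]
  have ht1sorted : t1.Pairwise (· < ·) := by
    refine set_sorted hp (by omega) (fun l hl => ?_) (fun l hl hl' => hmax l hl (by omega))
    exact lt_of_lt_of_le (nthL_lt hp hl (by omega)) hpile
  have ht2sorted : t2.Pairwise (· < ·) := zip_sorted max_strict hs1 ht1sorted
  have ht3sorted : t3.Pairwise (· < ·) := zip_sorted max_strict hs3 ht2sorted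
  have hpq : ∀ l < k, nthL p l ≤ nthL q l := fun l hl =>
    le_trans (g1 l hl) (le_trans (g2 l hl) (le_trans (g3 l hl) (g4 l hl)))
  refine ⟨t1, t2, t3, ht1sorted, ht2sorted, ht3sorted, ?_, ?_, ?_,
    ht1len, ht2len, ht3len, hlq, ?_, ?_, ?_, ?_, ?_, ?_, ?_⟩
  · intro v hv
    rcases List.mem_or_eq_of_mem_set hv with h | rfl
    · exact hpI v h
    · simp only [Finset.mem_Icc]; omega
  · intro v hv
    rcases mem_zip max_ch hv with h | h
    · exact hI1 v h
    · rcases List.mem_or_eq_of_mem_set h with h' | rfl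
      · exact hpI v h'
      · simp only [Finset.mem_Icc]; omega
  · intro v hv
    rcases mem_zip max_ch hv with h | h
    · exact hI3 v h
    · rcases mem_zip max_ch h with h' | h'
      · exact hI1 v h'
      · rcases List.mem_or_eq_of_mem_set h' with h'' | rfl
        · exact hpI v h''
        · simp only [Finset.mem_Icc]; omega
  · -- p ≤ t1
    intro l hl
    rw [ht1g l hl]
    by_cases hc : l = pi
    · rw [if_pos hc, hc]; exact hpile
    · rw [if_neg hc]
  · -- t1 ≤ t2
    intro l hl
    rw [ht2g l hl]; exact le_max_right _ _
  · -- t2 ≤ t3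
    intro l hl
    rw [ht3g l hl]; exact le_max_right _ _
  · -- t3 ≤ q
    intro l hl
    rw [ht3g l hl, ht2g l hl, ht1g l hl]
    refine max_le (g4 l hl) (max_le (le_trans (le_trans (g2 l hl) (g3 l hl)) (g4 l hl)) ?_)
    by_cases hc : l = pi
    · rw [if_pos hc, hc]
      calc a = nthL s2 j := hja.symm
        _ ≤ nthL s2 pi := nthL_le hs2 hjpi (by omega)
        _ ≤ nthL q pi := le_trans (g3 pi hpik) (g4 pi hpik)
    · rw [if_neg hc]; exact hpq l hl
  · -- a ∈ t1
    have : nthL t1 pi = a := by rw [ht1g pi hpik, if_pos rfl]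
    rw [← this]; exact nthL_mem (by omega)
  · -- c ∈ t2
    have : nthL t2 m = c := by
      rw [ht2g m hm, ht1g m hm, hmc]
      by_cases hc : m = pi
      · rw [if_pos hc]; omega
      · rw [if_neg hc]
        have : nthL p m ≤ nthL s1 m := g1 m hm
        rw [hmc] at this
        omega
    rw [← this]; exact nthL_mem (by omega)
  · -- b ∈ t3
    have : nthL t3 i = b := by
      rw [ht3g i hi, ht2g i hi, ht1g i hi, hib]
      have hs1i : nthL s1 i ≤ b := by rw [← hib]; exact le_trans (g2 i hi) (g3 i hi)
      by_cases hc : i = pi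
      · rw [if_pos hc]; omega
      · rw [if_neg hc]
        have : nthL p i ≤ nthL s1 i := g1 i hi
        omega
    rw [← this]; exact nthL_mem (by omega)

/-- Construction (IV): for `a ≤ b < c`, `acb` readable implies `cab` readable. -/
lemma stepIV {n a b c : ℕ} {p q : List ℕ} (hp : p.Pairwise (· < ·))
    (h1 : 1 ≤ a) (h2 : a ≤ b) (h3 : b < c) (h4 : c ≤ n)
    (h : LRead n a c b p q) : LRead n c a b p q := by
  obtain ⟨s1, s2, s3, hs1, hs2, hs3, hI1, hI2, hI3, hl1, hl2, hl3, hlq,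
    g1, g2, g3, g4, ma, mc, mb⟩ := h
  set k := p.length with hk
  obtain ⟨j, hj, hja⟩ := exists_idx ma
  obtain ⟨m, hm, hmc⟩ := exists_idx mc
  obtain ⟨i, hi, hib⟩ := exists_idx mb
  rw [hl1] at hj; rw [hl2] at hm; rw [hl3] at hi
  have hex : ∃ l, a ≤ nthL s3 l := ⟨i, by rw [hib]; exact h2⟩
  set j0 := Nat.find hex with hj0def
  have hspec : a ≤ nthL s3 j0 := Nat.find_spec hex
  have hj0i : j0 ≤ i := Nat.find_min' hex (by rw [hib]; exact h2)
  have hj0k : j0 < k := by omega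
  have hmin : ∀ l < j0, nthL s3 l < a := by
    intro l hl
    have := Nat.find_min hex hl
    omega
  have him : i < m := by
    by_contra hcon
    push_neg at hcon
    have h1' : nthL s3 m ≤ nthL s3 i := nthL_le hs3 hcon (by omega)
    have h2' : nthL s2 m ≤ nthL s3 m := g3 m hm
    rw [hmc] at h2'; rw [hib] at h1'
    omega
  have hjj0 : j0 ≤ j :=
    Nat.find_min' hex (by rw [← hja]; exact le_trans (g2 j hj) (g3 j hj))
  set t2 := s3.set j0 a with ht2def
  set t1 := List.zipWith min s2 t2 with ht1def
  have ht2len : t2.length = k := by rw [ht2def, List.length_set, hl3]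
  have ht1len : t1.length = k := by rw [ht1def, List.length_zipWith, hl2, ht2len]; omega
  have ht2g : ∀ l < k, nthL t2 l = if l = j0 then a else nthL s3 l := by
    intro l hl; rw [ht2def, nthL_set (by omega : l < s3.length)]
  have ht1g : ∀ l < k, nthL t1 l = min (nthL s2 l) (nthL t2 l) := by
    intro l hl; rw [ht1def, nthL_zip (by omega) (by omega)]
  have ht2sorted : t2.Pairwise (· < ·) := by
    refine set_sorted hs3 (by omega) hmin (fun l hl hl' => ?_)
    exact lt_of_le_of_lt hspec (nthL_lt hs3 hl (by omega))
  have ht1sorted : t1.Pairwise (· < ·) := zip_sorted min_strict hs2 ht2sorted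
  refine ⟨t1, t2, s3, ht1sorted, ht2sorted, hs3, ?_, ?_, hI3,
    ht1len, ht2len, hl3, hlq, ?_, ?_, ?_, g4, ?_, ?_, mb⟩
  · intro v hv
    rcases mem_zip min_ch hv with h | h
    · exact hI2 v h
    · rcases List.mem_or_eq_of_mem_set h with h' | rfl
      · exact hI3 v h'
      · simp only [Finset.mem_Icc]; omega
  · intro v hv
    rcases List.mem_or_eq_of_mem_set hv with h' | rfl
    · exact hI3 v h'
    · simp only [Finset.mem_Icc]; omega
  · -- p ≤ t1
    intro l hl
    rw [ht1g l hl, ht2g l hl]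
    refine le_min (le_trans (g1 l hl) (g2 l hl)) ?_
    by_cases hc : l = j0
    · rw [if_pos hc, hc]
      calc nthL p j0 ≤ nthL p j := nthL_le hp hjj0 (by omega)
        _ ≤ nthL s1 j := g1 j hj
        _ = a := hja
    · rw [if_neg hc]
      exact le_trans (g1 l hl) (le_trans (g2 l hl) (g3 l hl))
  · -- t1 ≤ t2
    intro l hl
    rw [ht1g l hl]; exact min_le_right _ _
  · -- t2 ≤ s3
    intro l hl
    rw [ht2g l hl]
    by_cases hc : l = j0
    · rw [if_pos hc, hc]; exact hspec
    · rw [if_neg hc]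
  · -- c ∈ t1
    have hmj0 : m ≠ j0 := by omega
    have : nthL t1 m = c := by
      rw [ht1g m hm, ht2g m hm, if_neg hmj0, hmc]
      have : nthL s2 m ≤ nthL s3 m := g3 m hm
      rw [hmc] at this
      omega
    rw [← this]; exact nthL_mem (by omega)
  · -- a ∈ t2
    have : nthL t2 j0 = a := by rw [ht2g j0 hj0k, if_pos rfl]
    rw [← this]; exact nthL_mem (by omega)

end Stmt9Aux

/-- for each Knuth relation `u = v` and all subsets `P, Q` of `{1,…,n}`
with `|P| = |Q|`, the word `u` is readable from `P` to `Q` iff `v` is: for `a < b ≤ c`,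
`bca` is readable iff `bac` is; and for `a ≤ b < c`, `cab` is readable iff `acb` is. -/
theorem stmt9 (n : ℕ) (P Q : Finset ℕ) (hP : P ⊆ Finset.Icc 1 n)
    (hQ : Q ⊆ Finset.Icc 1 n) (hcard : P.card = Q.card) :
    (∀ a b c : ℕ, 1 ≤ a → a < b → b ≤ c → c ≤ n →
      (Readable n [b, c, a] P Q ↔ Readable n [b, a, c] P Q)) ∧
    (∀ a b c : ℕ, 1 ≤ a → a ≤ b → b < c → c ≤ n →
      (Readable n [c, a, b] P Q ↔ Readable n [a, c, b] P Q)) := by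
  have hpI : ∀ v ∈ P.sort (· ≤ ·), v ∈ Finset.Icc 1 n :=
    fun v hv => hP ((Finset.mem_sort (· ≤ ·)).1 hv)
  have hqI : ∀ v ∈ Q.sort (· ≤ ·), v ∈ Finset.Icc 1 n :=
    fun v hv => hQ ((Finset.mem_sort (· ≤ ·)).1 hv)
  have hp : (P.sort (· ≤ ·)).Pairwise (· < ·) := (Finset.sortedLT_sort _).pairwise
  have hq : (Q.sort (· ≤ ·)).Pairwise (· < ·) := (Finset.sortedLT_sort _).pairwise
  constructor
  · intro a b c h1 h2 h3 h4
    rw [Stmt9Aux.readable3_iff, Stmt9Aux.readable3_iff]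
    exact ⟨Stmt9Aux.stepII hq hqI h1 h2 h3 h4, Stmt9Aux.stepI h1 h2 h3 h4⟩
  · intro a b c h1 h2 h3 h4
    rw [Stmt9Aux.readable3_iff, Stmt9Aux.readable3_iff]
    exact ⟨Stmt9Aux.stepIII hp hpI h1 h2 h3 h4, Stmt9Aux.stepIV hp h1 h2 h3 h4⟩
end
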